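/- Let D be an SI-concept in negation normal form and m = |sub(D)|. Then every path in any completion tree generated by the SI tableaux algorithm for D has length at most m⁴. -/

import Mathlib

/-- SHIQ-roles: role names (indexed by ℕ) and their inverses. -/
inductive Role where
  | atom : ℕ → Role
  | inv  : ℕ → Role
deriving DecidableEq

/-- The function `Inv` on roles: `Inv(R) = R⁻`, `Inv(R⁻) = R`. -/
def Role.Inv : Role → Role
  | .atom r => .inv r
  | .inv r  => .atom r

/-- The underlying role name of a (possibly inverse) role. -/
def Role.name : Role → ℕ
  | .atom r => r
  | .inv r  => r

/-- Concepts of the SHIQ family (with ⊤ and ⊥ for convenience). -/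
inductive DLConcept where
  | top : DLConcept
  | bot : DLConcept
  | atom : ℕ → DLConcept
  | neg : DLConcept → DLConcept
  | and : DLConcept → DLConcept → DLConcept
  | or : DLConcept → DLConcept → DLConcept
  | all : Role → DLConcept → DLConcept
  | ex : Role → DLConcept → DLConcept
  | atleast : ℕ → Role → DLConcept → DLConcept
  | atmost : ℕ → Role → DLConcept → DLConcept
deriving DecidableEq

/-- An interpretation: a (nonempty) domain, a valuation of concept names and
    of role names. -/
structure Interp where
  Dom : Type
  dom_nonempty : Nonempty Dom
  cI : ℕ → Set Dom
  rI : ℕ → Dom → Dom → Prop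

/-- Semantics of (possibly inverse) roles. -/
def Interp.rSem (I : Interp) : Role → I.Dom → I.Dom → Prop
  | .atom r => I.rI r
  | .inv r  => fun x y => I.rI r y x

/-- Semantics of concepts; number restrictions are interpreted by counting
    role successors (via cardinalities, so that infinite sets are handled
    correctly). -/
def Interp.cSem (I : Interp) : DLConcept → Set I.Dom
  | .top => Set.univ
  | .bot => ∅
  | .atom a => I.cI a
  | .neg C => (I.cSem C)ᶜ
  | .and C D => I.cSem C ∩ I.cSem D
  | .or C D => I.cSem C ∪ I.cSem D
  | .all R C => {x | ∀ y, I.rSem R x y → y ∈ I.cSem C}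
  | .ex R C => {x | ∃ y, I.rSem R x y ∧ y ∈ I.cSem C}
  | .atleast n R C => {x | (n : Cardinal) ≤ Cardinal.mk {y // I.rSem R x y ∧ y ∈ I.cSem C}}
  | .atmost n R C => {x | Cardinal.mk {y // I.rSem R x y ∧ y ∈ I.cSem C} ≤ (n : Cardinal)}

/-- `I.Good Rp`: the interpretation interprets every transitive role name
    (member of `Rp`) by a transitive relation. -/
def Interp.Good (I : Interp) (Rp : Set ℕ) : Prop :=
  ∀ r ∈ Rp, Transitive (I.rI r)

/-- The role hierarchy ⊑* generated by a finite set of role inclusion axioms: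
    inverses are added and the transitive-reflexive closure is taken. -/
def SubRole (RIA : List (Role × Role)) : Role → Role → Prop :=
  Relation.ReflTransGen (fun R S => (R, S) ∈ RIA ∨ (R.Inv, S.Inv) ∈ RIA)

/-- `I ⊨ R⁺`: the interpretation satisfies the role hierarchy. -/
def Interp.ModelsRH (I : Interp) (RIA : List (Role × Role)) : Prop :=
  ∀ R S, SubRole RIA R S → ∀ x y, I.rSem R x y → I.rSem S x y

/-- `Trans(R)`: a (possibly inverse) role is transitive iff its name is in `Rp`. -/
def RTrans (Rp : Set ℕ) : Role → Prop
  | .atom r => r ∈ Rp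
  | .inv r  => r ∈ Rp

/-- A role is simple iff it is neither transitive nor has a transitive sub-role. -/
def SimpleRole (Rp : Set ℕ) (RIA : List (Role × Role)) (R : Role) : Prop :=
  ∀ S, SubRole RIA S R → ¬ RTrans Rp S

/-- SHIQ-concepts: number restrictions occur only on simple roles. -/
def DLConcept.IsSHIQ (Rp : Set ℕ) (RIA : List (Role × Role)) : DLConcept → Prop
  | .top | .bot | .atom _ => True
  | .neg C => C.IsSHIQ Rp RIA
  | .and C D | .or C D => C.IsSHIQ Rp RIA ∧ D.IsSHIQ Rp RIA
  | .all _ C | .ex _ C => C.IsSHIQ Rp RIA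
  | .atleast _ R C | .atmost _ R C => SimpleRole Rp RIA R ∧ C.IsSHIQ Rp RIA

/-- Satisfiability of a concept w.r.t. a role hierarchy. -/
def Satisfiable (Rp : Set ℕ) (RIA : List (Role × Role)) (C : DLConcept) : Prop :=
  ∃ I : Interp, I.Good Rp ∧ I.ModelsRH RIA ∧ (I.cSem C).Nonempty

/-- Subsumption of concepts w.r.t. a role hierarchy. -/
def Subsumes (Rp : Set ℕ) (RIA : List (Role × Role)) (C D : DLConcept) : Prop :=
  ∀ I : Interp, I.Good Rp → I.ModelsRH RIA → I.cSem C ⊆ I.cSem D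

/-- Negation normal form: negation occurs only in front of concept names. -/
def DLConcept.IsNNF : DLConcept → Prop
  | .neg (.atom _) => True
  | .neg _ => False
  | .top | .bot | .atom _ => True
  | .and C D | .or C D => C.IsNNF ∧ D.IsNNF
  | .all _ C | .ex _ C => C.IsNNF
  | .atleast _ _ C | .atmost _ _ C => C.IsNNF

/-- `~C`: the negation normal form of `¬C` (for `C` in NNF). -/
def DLConcept.nnfNeg : DLConcept → DLConcept
  | .top => .bot
  | .bot => .top
  | .atom a => .neg (.atom a)
  | .neg C => C
  | .and C D => .or C.nnfNeg D.nnfNeg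
  | .or C D => .and C.nnfNeg D.nnfNeg
  | .all R C => .ex R C.nnfNeg
  | .ex R C => .all R C.nnfNeg
  | .atleast 0 _ _ => .bot
  | .atleast (n+1) R C => .atmost n R C
  | .atmost n R C => .atleast (n + 1) R C

/-- Direct (one-step) subconcepts. -/
inductive DirectSub : DLConcept → DLConcept → Prop
  | neg (C : DLConcept) : DirectSub C (.neg C)
  | andl (C D : DLConcept) : DirectSub C (.and C D)
  | andr (C D : DLConcept) : DirectSub D (.and C D)
  | orl (C D : DLConcept) : DirectSub C (.or C D)
  | orr (C D : DLConcept) : DirectSub D (.or C D)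
  | all (R : Role) (C : DLConcept) : DirectSub C (.all R C)
  | ex (R : Role) (C : DLConcept) : DirectSub C (.ex R C)
  | atleast (n : ℕ) (R : Role) (C : DLConcept) : DirectSub C (.atleast n R C)
  | atmost (n : ℕ) (R : Role) (C : DLConcept) : DirectSub C (.atmost n R C)

/-- `clos(D)`: the smallest set of concepts containing `D` that is closed under
subconcepts and under `~`. -/
inductive InClos (D : DLConcept) : DLConcept → Prop
  | base : InClos D D
  | sub {C C' : DLConcept} : InClos D C → DirectSub C' C → InClos D C'
  | nnf {C : DLConcept} : InClos D C → InClos D C.nnfNeg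

/-- The roles occurring in a concept. -/
def DLConcept.rolesOf : DLConcept → Finset Role
  | .top | .bot | .atom _ => ∅
  | .neg C => C.rolesOf
  | .and C D | .or C D => C.rolesOf ∪ D.rolesOf
  | .all R C | .ex R C => insert R C.rolesOf
  | .atleast _ R C | .atmost _ R C => insert R C.rolesOf

/-- `R_D`: the roles occurring in `D` and in the role hierarchy, together with
their inverses. -/
def RD (D : DLConcept) (RIA : List (Role × Role)) : Finset Role :=
  let base := D.rolesOf ∪ RIA.foldr (fun p acc => insert p.1 (insert p.2 acc)) ∅
  base ∪ base.image Role.Inv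

/-- SI-concepts: no number restrictions. -/
def DLConcept.IsSI : DLConcept → Prop
  | .top | .bot | .atom _ => True
  | .neg C => C.IsSI
  | .and C D | .or C D => C.IsSI ∧ D.IsSI
  | .all _ C | .ex _ C => C.IsSI
  | .atleast _ _ _ | .atmost _ _ _ => False

/-- Satisfiability of an SI-concept (no role hierarchy). -/
def SatisfiableSI (Rp : Set ℕ) (C : DLConcept) : Prop :=
  ∃ I : Interp, I.Good Rp ∧ (I.cSem C).Nonempty

/-- Subsumption of SI-concepts (no role hierarchy). -/
def SubsumesSI (Rp : Set ℕ) (C D : DLConcept) : Prop :=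
  ∀ I : Interp, I.Good Rp → I.cSem C ⊆ I.cSem D

/-- A completion tree for the SI algorithm: each node `x` carries two labels
`B(x) ⊆ L(x) ⊆ sub(D)`, and each edge (stored at the child) carries a single
(possibly inverse) role. -/
structure SITree where
  nodes : Finset ℕ
  root : ℕ
  parent : ℕ → ℕ
  lab : ℕ → Finset DLConcept
  blab : ℕ → Finset DLConcept
  elb : ℕ → Role
  root_mem : root ∈ nodes
  parent_mem : ∀ x ∈ nodes, x ≠ root → parent x ∈ nodes
  reach : ∀ x ∈ nodes, ∃ k, parent^[k] x = root
  blab_sub : ∀ x, blab x ⊆ lab x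

namespace SITree

/-- `y` is a successor of `x`. -/
def Succ (t : SITree) (x y : ℕ) : Prop :=
  y ∈ t.nodes ∧ y ≠ t.root ∧ t.parent y = x

/-- `y` is an `S`-successor of `x`. -/
def SSucc (t : SITree) (S : Role) (x y : ℕ) : Prop :=
  t.Succ x y ∧ t.elb y = S

/-- `y` is an `S`-predecessor of `x` (i.e. `x` is an `Inv(S)`-successor of `y`). -/
def SPred (t : SITree) (S : Role) (x y : ℕ) : Prop :=
  t.SSucc S.Inv y x

/-- `y` is an `S`-neighbour of `x`. -/
def SNeighb (t : SITree) (S : Role) (x y : ℕ) : Prop :=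
  t.SSucc S x y ∨ t.SPred S x y

/-- `x` is a (proper) ancestor of `y`. -/
def Anc (t : SITree) (x y : ℕ) : Prop :=
  y ∈ t.nodes ∧ ∃ k, 0 < k ∧ t.parent^[k] y = x ∧ ∀ j < k, t.parent^[j] y ≠ t.root

/-- The depth of a node (the length of the path from the root to it). -/
noncomputable def depth (t : SITree) (x : ℕ) : ℕ :=
  sInf {k | t.parent^[k] x = t.root}

/-- `L(x)/Inv(S) = { ∀Inv(S).C ∈ L(x) }` (as a set of concepts). -/
def restrInv (t : SITree) (S : Role) (x : ℕ) : Set DLConcept :=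
  {C | C ∈ t.lab x ∧ ∃ C', C = DLConcept.all S.Inv C'}

/-- The SI blocking-witness condition for a node `z` with predecessor `z'` and
incoming edge label `S`: `z` has an ancestor `y` with `B(z) ⊆ L(y)` and
`L(z)/Inv(S) = L(y)/Inv(S)`. -/
def BCand (t : SITree) (z : ℕ) : Prop :=
  z ∈ t.nodes ∧ z ≠ t.root ∧
  ∃ y, t.Anc y z ∧ (↑(t.blab z) : Set DLConcept) ⊆ ↑(t.lab y) ∧
    {C | C ∈ t.lab z ∧ ∃ C', C = DLConcept.all (t.elb z).Inv C'} =
    {C | C ∈ t.lab y ∧ ∃ C', C = DLConcept.all (t.elb z).Inv C'}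

/-- `x` is blocked: `x` itself or one of its ancestors satisfies the SI
blocking-witness condition. -/
def Blocked (t : SITree) (x : ℕ) : Prop :=
  ∃ z, (z = x ∨ t.Anc z x) ∧ t.BCand z

/-- The ⊓-rule is applicable to node `z`. -/
def ConjApp (t : SITree) (z : ℕ) : Prop :=
  ∃ C₁ C₂, DLConcept.and C₁ C₂ ∈ t.lab z ∧ ¬ ({C₁, C₂} ⊆ t.lab z)

/-- The ⊔-rule is applicable to node `z`. -/
def DisjApp (t : SITree) (z : ℕ) : Prop :=
  ∃ C₁ C₂, DLConcept.or C₁ C₂ ∈ t.lab z ∧ C₁ ∉ t.lab z ∧ C₂ ∉ t.lab z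

/-- The ∀-rule is applicable to node `z`. -/
def AllApp (t : SITree) (z : ℕ) : Prop :=
  ∃ S C, DLConcept.all S C ∈ t.lab z ∧
    ((∃ y, t.SSucc S z y ∧ C ∉ t.blab y) ∨ (∃ y, t.SPred S z y ∧ C ∉ t.lab y))

/-- The ∀₊-rule is applicable to node `z`. -/
def AllTransApp (Rp : Set ℕ) (t : SITree) (z : ℕ) : Prop :=
  ∃ S C, DLConcept.all S C ∈ t.lab z ∧ RTrans Rp S ∧
    ((∃ y, t.SSucc S z y ∧ DLConcept.all S C ∉ t.blab y) ∨
     (∃ y, t.SPred S z y ∧ DLConcept.all S C ∉ t.lab y))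

end SITree

/-- The expansion rules of the SI tableaux algorithm, as a one-step transition
relation between SI completion trees. -/
inductive SIStep (Rp : Set ℕ) : SITree → SITree → Prop
  | conj (t t' : SITree) (x : ℕ) (C₁ C₂ : DLConcept)
      (hx : x ∈ t.nodes) (hC : DLConcept.and C₁ C₂ ∈ t.lab x)
      (hnew : ¬ ({C₁, C₂} ⊆ t.lab x))
      (hn : t'.nodes = t.nodes) (hr : t'.root = t.root) (hp : t'.parent = t.parent)
      (hl : t'.lab = Function.update t.lab x (t.lab x ∪ {C₁, C₂}))
      (hb : t'.blab = t.blab) (he : t'.elb = t.elb) :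
      SIStep Rp t t'
  | disj (t t' : SITree) (x : ℕ) (C₁ C₂ E : DLConcept)
      (hx : x ∈ t.nodes) (hC : DLConcept.or C₁ C₂ ∈ t.lab x)
      (hnew : C₁ ∉ t.lab x ∧ C₂ ∉ t.lab x) (hE : E = C₁ ∨ E = C₂)
      (hn : t'.nodes = t.nodes) (hr : t'.root = t.root) (hp : t'.parent = t.parent)
      (hl : t'.lab = Function.update t.lab x (insert E (t.lab x)))
      (hb : t'.blab = t.blab) (he : t'.elb = t.elb) :
      SIStep Rp t t'
  | allSucc (t t' : SITree) (x y : ℕ) (S : Role) (C : DLConcept)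
      (hx : x ∈ t.nodes) (hC : DLConcept.all S C ∈ t.lab x)
      (hy : t.SSucc S x y) (hnew : C ∉ t.blab y)
      (hn : t'.nodes = t.nodes) (hr : t'.root = t.root) (hp : t'.parent = t.parent)
      (hl : t'.lab = Function.update t.lab y (insert C (t.lab y)))
      (hb : t'.blab = Function.update t.blab y (insert C (t.blab y)))
      (he : t'.elb = t.elb) :
      SIStep Rp t t'
  | allPred (t t' : SITree) (x y : ℕ) (S : Role) (C : DLConcept)
      (hx : x ∈ t.nodes) (hC : DLConcept.all S C ∈ t.lab x)
      (hy : t.SPred S x y) (hnew : C ∉ t.lab y)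
      (hn : t'.nodes = t.nodes) (hr : t'.root = t.root) (hp : t'.parent = t.parent)
      (hl : t'.lab = Function.update t.lab y (insert C (t.lab y)))
      (hb : t'.blab = t.blab) (he : t'.elb = t.elb) :
      SIStep Rp t t'
  | allTransSucc (t t' : SITree) (x y : ℕ) (S : Role) (C : DLConcept)
      (hx : x ∈ t.nodes) (hC : DLConcept.all S C ∈ t.lab x) (htr : RTrans Rp S)
      (hy : t.SSucc S x y) (hnew : DLConcept.all S C ∉ t.blab y)
      (hn : t'.nodes = t.nodes) (hr : t'.root = t.root) (hp : t'.parent = t.parent)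
      (hl : t'.lab = Function.update t.lab y (insert (DLConcept.all S C) (t.lab y)))
      (hb : t'.blab = Function.update t.blab y (insert (DLConcept.all S C) (t.blab y)))
      (he : t'.elb = t.elb) :
      SIStep Rp t t'
  | allTransPred (t t' : SITree) (x y : ℕ) (S : Role) (C : DLConcept)
      (hx : x ∈ t.nodes) (hC : DLConcept.all S C ∈ t.lab x) (htr : RTrans Rp S)
      (hy : t.SPred S x y) (hnew : DLConcept.all S C ∉ t.lab y)
      (hn : t'.nodes = t.nodes) (hr : t'.root = t.root) (hp : t'.parent = t.parent)
      (hl : t'.lab = Function.update t.lab y (insert (DLConcept.all S C) (t.lab y)))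
      (hb : t'.blab = t.blab) (he : t'.elb = t.elb) :
      SIStep Rp t t'
  | exists_ (t t' : SITree) (x y : ℕ) (S : Role) (C : DLConcept)
      (hx : x ∈ t.nodes) (hC : DLConcept.ex S C ∈ t.lab x)
      (hnb : ¬ t.Blocked x)
      (hanc : ∀ z, t.Anc z x →
        ¬ (t.ConjApp z ∨ t.DisjApp z ∨ t.AllApp z ∨ t.AllTransApp Rp z))
      (hnew : ¬ ∃ z, t.SNeighb S x z ∧ C ∈ t.lab z)
      (hy : y ∉ t.nodes)
      (hn : t'.nodes = insert y t.nodes) (hr : t'.root = t.root)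
      (hp : t'.parent = Function.update t.parent y x)
      (hl : t'.lab = Function.update t.lab y {C})
      (hb : t'.blab = Function.update t.blab y {C})
      (he : t'.elb = Function.update t.elb y S) :
      SIStep Rp t t'

/-- The initial SI completion tree: a single root node with `B = L = {D}`. -/
def initSITree (D : DLConcept) : SITree where
  nodes := {0}
  root := 0
  parent := id
  lab := fun x => if x = 0 then {D} else ∅
  blab := fun x => if x = 0 then {D} else ∅
  elb := fun _ => Role.atom 0
  root_mem := by simp
  parent_mem := by intro x hx hne; simp at hx; exact absurd hx hne
  reach := by intro x hx; simp at hx; exact ⟨0, by simpa using hx⟩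
  blab_sub := by intro x; exact Finset.Subset.refl _

/-! ### Auxiliary development for `si_path_bound` -/

namespace SIPB

/-- Size of a concept. -/
def csize : DLConcept → ℕ
  | .top => 1
  | .bot => 1
  | .atom _ => 1
  | .neg C => csize C + 1
  | .and C₁ C₂ => csize C₁ + csize C₂ + 1
  | .or C₁ C₂ => csize C₁ + csize C₂ + 1
  | .all _ C => csize C + 1
  | .ex _ C => csize C + 1
  | .atleast _ _ C => csize C + 1
  | .atmost _ _ C => csize C + 1

lemma csize_lt_of_directSub {C C' : DLConcept} (h : DirectSub C C') : csize C < csize C' := by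
  cases h <;> simp [csize] <;> omega

/-- The set of subconcepts, as a `Finset`. -/
def subl : DLConcept → Finset DLConcept
  | .top => {.top}
  | .bot => {.bot}
  | .atom a => {.atom a}
  | .neg C => insert (.neg C) (subl C)
  | .and C₁ C₂ => insert (.and C₁ C₂) (subl C₁ ∪ subl C₂)
  | .or C₁ C₂ => insert (.or C₁ C₂) (subl C₁ ∪ subl C₂)
  | .all R C => insert (.all R C) (subl C)
  | .ex R C => insert (.ex R C) (subl C)
  | .atleast n R C => insert (.atleast n R C) (subl C)
  | .atmost n R C => insert (.atmost n R C) (subl C)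

lemma self_mem_subl (C : DLConcept) : C ∈ subl C := by
  cases C <;> simp [subl]

lemma subl_closed {C' C D : DLConcept} (hD : C ∈ subl D) (h : DirectSub C' C) :
    C' ∈ subl D := by
  induction D with
  | top => simp [subl] at hD; subst hD; cases h
  | bot => simp [subl] at hD; subst hD; cases h
  | atom a => simp [subl] at hD; subst hD; cases h
  | neg C ih =>
    simp only [subl, Finset.mem_insert] at hD ⊢
    rcases hD with rfl | hD
    · cases h; exact Or.inr (self_mem_subl _)
    · exact Or.inr (ih hD)
  | and C₁ C₂ ih₁ ih₂ =>
    simp only [subl, Finset.mem_insert, Finset.mem_union] at hD ⊢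
    rcases hD with rfl | hD | hD
    · cases h
      · exact Or.inr (Or.inl (self_mem_subl _))
      · exact Or.inr (Or.inr (self_mem_subl _))
    · exact Or.inr (Or.inl (ih₁ hD))
    · exact Or.inr (Or.inr (ih₂ hD))
  | or C₁ C₂ ih₁ ih₂ =>
    simp only [subl, Finset.mem_insert, Finset.mem_union] at hD ⊢
    rcases hD with rfl | hD | hD
    · cases h
      · exact Or.inr (Or.inl (self_mem_subl _))
      · exact Or.inr (Or.inr (self_mem_subl _))
    · exact Or.inr (Or.inl (ih₁ hD))
    · exact Or.inr (Or.inr (ih₂ hD))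
  | all R C ih =>
    simp only [subl, Finset.mem_insert] at hD ⊢
    rcases hD with rfl | hD
    · cases h; exact Or.inr (self_mem_subl _)
    · exact Or.inr (ih hD)
  | ex R C ih =>
    simp only [subl, Finset.mem_insert] at hD ⊢
    rcases hD with rfl | hD
    · cases h; exact Or.inr (self_mem_subl _)
    · exact Or.inr (ih hD)
  | atleast n R C ih =>
    simp only [subl, Finset.mem_insert] at hD ⊢
    rcases hD with rfl | hD
    · cases h; exact Or.inr (self_mem_subl _)
    · exact Or.inr (ih hD)
  | atmost n R C ih =>
    simp only [subl, Finset.mem_insert] at hD ⊢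
    rcases hD with rfl | hD
    · cases h; exact Or.inr (self_mem_subl _)
    · exact Or.inr (ih hD)

lemma mem_subl_of_rtg {C D : DLConcept} (h : Relation.ReflTransGen DirectSub C D) :
    C ∈ subl D := by
  induction h using Relation.ReflTransGen.head_induction_on with
  | refl => exact self_mem_subl D
  | head hstep _ ih => exact subl_closed ih hstep

lemma rtg_of_mem_subl {C D : DLConcept} (h : C ∈ subl D) :
    Relation.ReflTransGen DirectSub C D := by
  induction D with
  | top => simp [subl] at h; subst h; rfl
  | bot => simp [subl] at h; subst h; rfl
  | atom a => simp [subl] at h; subst h; rfl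
  | neg C ih =>
    simp only [subl, Finset.mem_insert] at h
    rcases h with rfl | h
    · rfl
    · exact (ih h).trans (Relation.ReflTransGen.single (DirectSub.neg _))
  | and C₁ C₂ ih₁ ih₂ =>
    simp only [subl, Finset.mem_insert, Finset.mem_union] at h
    rcases h with rfl | h | h
    · rfl
    · exact (ih₁ h).trans (Relation.ReflTransGen.single (DirectSub.andl _ _))
    · exact (ih₂ h).trans (Relation.ReflTransGen.single (DirectSub.andr _ _))
  | or C₁ C₂ ih₁ ih₂ =>
    simp only [subl, Finset.mem_insert, Finset.mem_union] at h
    rcases h with rfl | h | h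
    · rfl
    · exact (ih₁ h).trans (Relation.ReflTransGen.single (DirectSub.orl _ _))
    · exact (ih₂ h).trans (Relation.ReflTransGen.single (DirectSub.orr _ _))
  | all R C ih =>
    simp only [subl, Finset.mem_insert] at h
    rcases h with rfl | h
    · rfl
    · exact (ih h).trans (Relation.ReflTransGen.single (DirectSub.all _ _))
  | ex R C ih =>
    simp only [subl, Finset.mem_insert] at h
    rcases h with rfl | h
    · rfl
    · exact (ih h).trans (Relation.ReflTransGen.single (DirectSub.ex _ _))
  | atleast n R C ih =>
    simp only [subl, Finset.mem_insert] at h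
    rcases h with rfl | h
    · rfl
    · exact (ih h).trans (Relation.ReflTransGen.single (DirectSub.atleast _ _ _))
  | atmost n R C ih =>
    simp only [subl, Finset.mem_insert] at h
    rcases h with rfl | h
    · rfl
    · exact (ih h).trans (Relation.ReflTransGen.single (DirectSub.atmost _ _ _))

lemma subD_eq_subl (D : DLConcept) :
    {C | Relation.ReflTransGen DirectSub C D} = (↑(subl D) : Set DLConcept) := by
  ext C; exact ⟨mem_subl_of_rtg, rtg_of_mem_subl⟩

lemma ncard_subD (D : DLConcept) :
    {C | Relation.ReflTransGen DirectSub C D}.ncard = (subl D).card := by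
  rw [subD_eq_subl, Set.ncard_coe_finset]

lemma amgm (x y z : ℕ) : 27 * (x * y * z) ≤ (x + y + z) ^ 3 := by
  have h : (27 : ℤ) * (x * y * z) ≤ ((x : ℤ) + y + z) ^ 3 := by
    have hx : (0:ℤ) ≤ x := Int.natCast_nonneg x
    have hy : (0:ℤ) ≤ y := Int.natCast_nonneg y
    have hz : (0:ℤ) ≤ z := Int.natCast_nonneg z
    nlinarith [mul_nonneg hx (sq_nonneg ((y:ℤ)-z)), mul_nonneg hy (sq_nonneg ((x:ℤ)-z)),
      mul_nonneg hz (sq_nonneg ((x:ℤ)-y)), mul_nonneg (add_nonneg (add_nonneg hx hy) hz)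
        (add_nonneg (add_nonneg (sq_nonneg ((x:ℤ)-y)) (sq_nonneg ((y:ℤ)-z))) (sq_nonneg ((x:ℤ)-z)))]
  exact_mod_cast h

lemma final_arith {m n : ℕ} (hm : 2 ≤ m)
    (h : 27 * n ≤ 54 * m + m * (m + 2) ^ 3) : n + 1 ≤ m ^ 4 := by
  have h2 : 54 * m + m * (m + 2) ^ 3 + 27 ≤ 27 * m ^ 4 := by
    have hm' : (2:ℤ) ≤ (m:ℤ) := by exact_mod_cast hm
    have : 54 * (m:ℤ) + m * (m + 2) ^ 3 + 27 ≤ 27 * (m:ℤ) ^ 4 := by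
      nlinarith [hm', mul_le_mul_of_nonneg_left hm' (by positivity : (0:ℤ) ≤ (m:ℤ)^2),
        mul_le_mul_of_nonneg_left hm' (by positivity : (0:ℤ) ≤ (m:ℤ)^3),
        mul_le_mul_of_nonneg_left hm' (by positivity : (0:ℤ) ≤ (m:ℤ)),
        sq_nonneg ((m:ℤ) - 2)]
    exact_mod_cast this
  have h3 : 27 * (n + 1) ≤ 27 * m ^ 4 := by
    calc 27 * (n + 1) = 27 * n + 27 := by ring
    _ ≤ 54 * m + m * (m + 2) ^ 3 + 27 := by omega
    _ ≤ 27 * m ^ 4 := h2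
  exact Nat.le_of_mul_le_mul_left h3 (by norm_num)

end SIPB
namespace SIPB

/-! ### Tree-order and path lemmas -/

/-- `u` is an ancestor-or-self of `v` (w.r.t. the parent function). -/
def below (t : SITree) (u v : ℕ) : Prop := ∃ j, t.parent^[j] v = u

lemma below_refl (t : SITree) (v : ℕ) : below t v v := ⟨0, rfl⟩

lemma below_of_parent {t : SITree} {u v : ℕ} (h : below t u (t.parent v)) :
    below t u v := by
  obtain ⟨j, hj⟩ := h
  exact ⟨j + 1, by rw [Function.iterate_succ_apply]; exact hj⟩

lemma below_child {t : SITree} {u v : ℕ} (h : below t u v) :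
    u = v ∨ below t u (t.parent v) := by
  obtain ⟨j, hj⟩ := h
  cases j with
  | zero => exact Or.inl hj.symm
  | succ j => exact Or.inr ⟨j, by rw [← Function.iterate_succ_apply]; exact hj⟩

lemma below_root {t : SITree} (hroot : t.parent t.root = t.root) {u : ℕ}
    (h : below t u t.root) : u = t.root := by
  obtain ⟨j, hj⟩ := h
  have : ∀ j, t.parent^[j] t.root = t.root := by
    intro j
    induction j with
    | zero => rfl
    | succ j ih => rw [Function.iterate_succ_apply', ih, hroot]
  rw [this j] at hj; exact hj.symm

lemma depth_spec {t : SITree} {x : ℕ} (hx : x ∈ t.nodes) :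
    t.parent^[t.depth x] x = t.root := by
  have h : {k | t.parent^[k] x = t.root}.Nonempty := t.reach x hx
  exact Nat.sInf_mem h

lemma depth_min {t : SITree} {x k : ℕ} (hk : k < t.depth x) :
    t.parent^[k] x ≠ t.root := by
  intro h
  have : t.depth x ≤ k := Nat.sInf_le h
  omega

/-- The `k`-th node on the path from the root to `x` (`k = 0` is the root). -/
noncomputable def pnode (t : SITree) (x k : ℕ) : ℕ := t.parent^[t.depth x - k] x

lemma pnode_last (t : SITree) (x : ℕ) : pnode t x (t.depth x) = x := by
  simp [pnode]

lemma pnode_zero {t : SITree} {x : ℕ} (hx : x ∈ t.nodes) : pnode t x 0 = t.root := by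
  simp [pnode, depth_spec hx]

lemma pnode_parent {t : SITree} {x k : ℕ} (hk : k < t.depth x) :
    t.parent (pnode t x (k + 1)) = pnode t x k := by
  unfold pnode
  have h1 : t.depth x - k = (t.depth x - (k+1)) + 1 := by omega
  rw [h1, Function.iterate_succ_apply']

lemma pnode_ne_root {t : SITree} {x k : ℕ} (h1 : 1 ≤ k) (h2 : k ≤ t.depth x) :
    pnode t x k ≠ t.root := depth_min (by omega)

lemma iter_mem {t : SITree} {x : ℕ} (hx : x ∈ t.nodes) :
    ∀ j, j ≤ t.depth x → t.parent^[j] x ∈ t.nodes := by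
  intro j
  induction j with
  | zero => exact fun _ => hx
  | succ j ih =>
    intro hj
    rw [Function.iterate_succ_apply']
    exact t.parent_mem _ (ih (by omega)) (depth_min (by omega))

lemma pnode_mem {t : SITree} {x : ℕ} (hx : x ∈ t.nodes) {k : ℕ} (_ : k ≤ t.depth x) :
    pnode t x k ∈ t.nodes := iter_mem hx _ (by omega)

lemma pnode_iter {t : SITree} {x k a : ℕ} (_ : k ≤ t.depth x) (ha : a ≤ k) :
    t.parent^[a] (pnode t x k) = pnode t x (k - a) := by
  unfold pnode
  rw [← Function.iterate_add_apply t.parent a (t.depth x - k) x]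
  congr 1
  omega

lemma pnode_inj {t : SITree} {x : ℕ} (hx : x ∈ t.nodes) {k k' : ℕ}
    (hk : k ≤ t.depth x) (hk' : k' ≤ t.depth x) (h : pnode t x k = pnode t x k') :
    k = k' := by
  by_contra hne
  rcases Nat.lt_or_ge k k' with hlt | hge
  · have h1 : t.parent^[k] (pnode t x k) = t.root := by
      rw [pnode_iter hk le_rfl]; simp [pnode, depth_spec hx]
    have h2 : t.parent^[k] (pnode t x k') = pnode t x (k' - k) := pnode_iter hk' (by omega)
    rw [h, h2] at h1
    exact pnode_ne_root (by omega) (by omega) h1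
  · have hlt : k' < k := by omega
    have h1 : t.parent^[k'] (pnode t x k') = t.root := by
      rw [pnode_iter hk' le_rfl]; simp [pnode, depth_spec hx]
    have h2 : t.parent^[k'] (pnode t x k) = pnode t x (k - k') := pnode_iter hk (by omega)
    rw [← h, h2] at h1
    exact pnode_ne_root (by omega) (by omega) h1

lemma anc_pnode {t : SITree} {x : ℕ} (hx : x ∈ t.nodes) {j i : ℕ}
    (hji : j < i) (hi : i ≤ t.depth x) : t.Anc (pnode t x j) (pnode t x i) := by
  refine ⟨pnode_mem hx hi, i - j, by omega, ?_, ?_⟩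
  · rw [pnode_iter hi (by omega)]; congr 1; omega
  · intro a ha
    rw [pnode_iter hi (by omega)]
    exact pnode_ne_root (by omega) (by omega)

lemma below_pnode {t : SITree} {x : ℕ} {j i : ℕ}
    (hji : j ≤ i) (hi : i ≤ t.depth x) : below t (pnode t x j) (pnode t x i) :=
  ⟨i - j, by rw [pnode_iter hi (by omega)]; congr 1; omega⟩

end SIPB
namespace SIPB

/-! ### Role lemmas -/

lemma inv_inv (R : Role) : R.Inv.Inv = R := by cases R <;> rfl

lemma inv_ne (R : Role) : Role.Inv R ≠ R := by cases R <;> simp [Role.Inv]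

lemma rtrans_inv {Rp : Set ℕ} {R : Role} (h : RTrans Rp R) : RTrans Rp R.Inv := by
  cases R <;> exact h

lemma noselfparent {t : SITree} {y : ℕ} (hy : y ∈ t.nodes) (hne : y ≠ t.root) :
    t.parent y ≠ y := by
  intro h
  obtain ⟨k, hk⟩ := t.reach y hy
  have : ∀ j, t.parent^[j] y = y := by
    intro j
    induction j with
    | zero => rfl
    | succ j ih => rw [Function.iterate_succ_apply', ih, h]
  rw [this k] at hk
  exact hne hk

/-! ### The justification relation -/

/-- `J Rp D t u F`: the concept `F` can occur at node `u` by the dynamics of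
the SI algorithm (a provenance certificate). -/
inductive J (Rp : Set ℕ) (D : DLConcept) (t : SITree) : ℕ → DLConcept → Prop
  | base : J Rp D t t.root D
  | andl {x : ℕ} {C₁ C₂ : DLConcept} : J Rp D t x (.and C₁ C₂) → J Rp D t x C₁
  | andr {x : ℕ} {C₁ C₂ : DLConcept} : J Rp D t x (.and C₁ C₂) → J Rp D t x C₂
  | orl {x : ℕ} {C₁ C₂ : DLConcept} : J Rp D t x (.or C₁ C₂) → J Rp D t x C₁
  | orr {x : ℕ} {C₁ C₂ : DLConcept} : J Rp D t x (.or C₁ C₂) → J Rp D t x C₂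
  | created {y : ℕ} {C : DLConcept} : y ∈ t.nodes → y ≠ t.root →
      J Rp D t (t.parent y) (.ex (t.elb y) C) → J Rp D t y C
  | bodyDown {y : ℕ} {F : DLConcept} : y ∈ t.nodes → y ≠ t.root →
      J Rp D t (t.parent y) (.all (t.elb y) F) → J Rp D t y F
  | bodyUp {y : ℕ} {S : Role} {F : DLConcept} : y ∈ t.nodes → y ≠ t.root →
      t.elb y = Role.Inv S → J Rp D t y (.all S F) → J Rp D t (t.parent y) F
  | transDown {y : ℕ} {F : DLConcept} : y ∈ t.nodes → y ≠ t.root →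
      RTrans Rp (t.elb y) → J Rp D t (t.parent y) (.all (t.elb y) F) →
      J Rp D t y (.all (t.elb y) F)
  | transUp {y : ℕ} {S : Role} {F : DLConcept} : y ∈ t.nodes → y ≠ t.root →
      t.elb y = Role.Inv S → RTrans Rp S → J Rp D t y (.all S F) →
      J Rp D t (t.parent y) (.all S F)

lemma J_sub {Rp : Set ℕ} {D : DLConcept} {t : SITree} {u : ℕ} {F : DLConcept}
    (h : J Rp D t u F) : F ∈ subl D := by
  induction h with
  | base => exact self_mem_subl D
  | andl _ ih => exact subl_closed ih (DirectSub.andl _ _)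
  | andr _ ih => exact subl_closed ih (DirectSub.andr _ _)
  | orl _ ih => exact subl_closed ih (DirectSub.orl _ _)
  | orr _ ih => exact subl_closed ih (DirectSub.orr _ _)
  | created _ _ _ ih => exact subl_closed ih (DirectSub.ex _ _)
  | bodyDown _ _ _ ih => exact subl_closed ih (DirectSub.all _ _)
  | bodyUp _ _ _ _ ih => exact subl_closed ih (DirectSub.all _ _)
  | transDown _ _ _ _ ih => exact ih
  | transUp _ _ _ _ _ ih => exact ih

lemma J_mono {Rp : Set ℕ} {D : DLConcept} {t t' : SITree}
    (hn : ∀ w, w ∈ t.nodes → w ∈ t'.nodes) (hr : t'.root = t.root)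
    (hp : ∀ w ∈ t.nodes, t'.parent w = t.parent w)
    (he : ∀ w ∈ t.nodes, t'.elb w = t.elb w) :
    ∀ {u : ℕ} {F : DLConcept}, J Rp D t u F → J Rp D t' u F := by
  intro u F h
  induction h with
  | base => rw [← hr]; exact J.base
  | andl _ ih => exact J.andl ih
  | andr _ ih => exact J.andr ih
  | orl _ ih => exact J.orl ih
  | orr _ ih => exact J.orr ih
  | @created y C hy hyr _ ih =>
    have := J.created (Rp := Rp) (D := D) (t := t') (hn y hy) (by rw [hr]; exact hyr)
      (by rw [hp y hy, he y hy]; exact ih)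
    exact this
  | @bodyDown y F hy hyr _ ih =>
    exact J.bodyDown (hn y hy) (by rw [hr]; exact hyr) (by rw [hp y hy, he y hy]; exact ih)
  | @bodyUp y S F hy hyr helb _ ih =>
    have := J.bodyUp (Rp := Rp) (D := D) (t := t') (hn y hy) (by rw [hr]; exact hyr)
      (by rw [he y hy]; exact helb) ih
    rwa [hp y hy] at this
  | @transDown y F hy hyr htr _ ih =>
    have := J.transDown (Rp := Rp) (D := D) (t := t') (hn y hy) (by rw [hr]; exact hyr)
      (by rw [he y hy]; exact htr) (by rw [hp y hy, he y hy]; exact ih)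
    rwa [he y hy] at this
  | @transUp y S F hy hyr helb htr _ ih =>
    have := J.transUp (Rp := Rp) (D := D) (t := t') (hn y hy) (by rw [hr]; exact hyr)
      (by rw [he y hy]; exact helb) htr ih
    rwa [hp y hy] at this

/-! ### The global invariant -/

structure Inv (Rp : Set ℕ) (D : DLConcept) (t : SITree) : Prop where
  labsub : ∀ x : ℕ, ∀ F ∈ t.lab x, F ∈ subl D
  junklab : ∀ x : ℕ, x ∉ t.nodes → t.lab x = ∅
  prootp : t.parent t.root = t.root
  binv : ∀ y ∈ t.nodes, y ≠ t.root → ∃ C ∈ t.blab y,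
      DLConcept.ex (t.elb y) C ∈ t.lab (t.parent y) ∧
      ∀ F ∈ t.blab y, F = C ∨ DLConcept.all (t.elb y) F ∈ t.lab (t.parent y) ∨
        (RTrans Rp (t.elb y) ∧ (∃ E, F = DLConcept.all (t.elb y) E) ∧
          F ∈ t.lab (t.parent y))
  jinv : ∀ x : ℕ, ∀ F ∈ t.lab x, J Rp D t x F

end SIPB
namespace SIPB

/-! ### Tagged walks along the path to `x` -/

/-- Bookkeeping data for the provenance walk: a partial tagging of the edges
of the path from the root to `x` (edge `k` goes from `pnode k` to
`pnode (k+1)`), recording for each first-crossed edge the concept carried at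
crossing time, together with a flag telling whether the crossing was a
transitive-propagation step. -/
structure WData (Rp : Set ℕ) (D : DLConcept) (t : SITree) (x : ℕ)
    (u : ℕ) (F : DLConcept) (T : ℕ → Option (DLConcept × Bool)) : Prop where
  cov : ∀ k, k < t.depth x → below t (pnode t x (k+1)) u → (T k).isSome
  dom : ∀ k τ, T k = some τ → k < t.depth x
  mem : ∀ k τ, T k = some τ → τ.1 ∈ subl D
  ge : ∀ k τ, T k = some τ → csize F ≤ csize τ.1
  anti : ∀ k k' τ τ', k ≤ k' → T k = some τ → T k' = some τ' → csize τ'.1 ≤ csize τ.1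
  sstrict : ∀ k k' τ τ', k < k' → T k = some τ → τ.2 = false → T k' = some τ' →
      csize τ'.1 < csize τ.1
  scur : ∀ k τ, T k = some τ → τ.2 = false → csize F < csize τ.1
  feq : ∀ k τ, T k = some τ → τ.2 = true → csize τ.1 = csize F → τ.1 = F
  fprop : ∀ k τ, T k = some τ → τ.2 = true →
      ∃ R E, τ.1 = DLConcept.all R E ∧ RTrans Rp R ∧ t.elb (pnode t x (k+1)) = R
  ff : ∀ k k' τ τ', T k = some τ → τ.2 = true → T k' = some τ' → τ'.2 = true →
      csize τ.1 = csize τ'.1 → τ.1 = τ'.1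
  dc : ∀ k k', k ≤ k' → (T k').isSome → (T k).isSome

/-- Staying at the same node while the concept shrinks (or stays). -/
lemma wdata_shrink {Rp : Set ℕ} {D : DLConcept} {t : SITree} {x u : ℕ}
    {F F' : DLConcept} {T : ℕ → Option (DLConcept × Bool)}
    (h : WData Rp D t x u F T) (hle : csize F' < csize F) :
    WData Rp D t x u F' T where
  cov := h.cov
  dom := h.dom
  mem := h.mem
  ge := fun k τ hk => le_trans (le_of_lt hle) (h.ge k τ hk)
  anti := h.anti
  sstrict := h.sstrict
  scur := fun k τ hk _ => lt_of_lt_of_le hle (h.ge k τ hk)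
  feq := fun k τ hk _ heq => absurd heq (by
    have := h.ge k τ hk
    omega)
  fprop := h.fprop
  ff := h.ff
  dc := h.dc

/-- Moving up to the parent (concept may shrink or stay). -/
lemma wdata_up {Rp : Set ℕ} {D : DLConcept} {t : SITree} {x u : ℕ}
    {F : DLConcept} {T : ℕ → Option (DLConcept × Bool)}
    (h : WData Rp D t x u F T) :
    WData Rp D t x (t.parent u) F T where
  cov := fun k hk hb => h.cov k hk (below_of_parent hb)
  dom := h.dom
  mem := h.mem
  ge := h.ge
  anti := h.anti
  sstrict := h.sstrict
  scur := h.scur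
  feq := h.feq
  fprop := h.fprop
  ff := h.ff
  dc := h.dc

/-- Moving down to a child `y` of `u`. -/
lemma wdata_down {Rp : Set ℕ} {D : DLConcept} {t : SITree} {x : ℕ} (hx : x ∈ t.nodes)
    {u : ℕ} {F : DLConcept} {T : ℕ → Option (DLConcept × Bool)}
    (h : WData Rp D t x u F T)
    {y : ℕ} (hyr : y ≠ t.root) (hyu : t.parent y = u)
    {F' : DLConcept} {b : Bool}
    (hF : F ∈ subl D)
    (hle : csize F' ≤ csize F)
    (hflow : b = true → F' = F ∧ ∃ R E, F = DLConcept.all R E ∧ RTrans Rp R ∧ t.elb y = R)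
    (hshrink : b = false → csize F' < csize F) :
    ∃ T', WData Rp D t x y F' T' := by
  classical
  by_cases hk : ∃ k, k < t.depth x ∧ pnode t x (k+1) = y ∧ T k = none
  · obtain ⟨k0, hk0n, hk0y, hk0none⟩ := hk
    refine ⟨Function.update T k0 (some (F, b)), ?_⟩
    have hold : ∀ k τ, T k = some τ → k < k0 := by
      intro k τ hkτ
      by_contra hge
      have h1 : (T k).isSome := by rw [hkτ]; rfl
      have h2 : (T k0).isSome := h.dc k0 k (by omega) h1
      rw [hk0none] at h2; exact absurd h2 (by simp)
    have hu_eq : u = pnode t x k0 := by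
      rw [← hyu, ← hk0y, pnode_parent hk0n]
    have hcovold : ∀ k, k < k0 → (T k).isSome := by
      intro k hkk
      apply h.cov k (by omega)
      rw [hu_eq]
      exact below_pnode (by omega) (by omega)
    have hget : ∀ k τ, Function.update T k0 (some (F, b)) k = some τ →
        (k = k0 ∧ τ = (F, b)) ∨ (k ≠ k0 ∧ T k = some τ) := by
      intro k τ hkτ
      by_cases hkeq : k = k0
      · subst hkeq; rw [Function.update_self] at hkτ
        exact Or.inl ⟨rfl, by injection hkτ with h'; exact h'.symm⟩
      · rw [Function.update_of_ne hkeq] at hkτ; exact Or.inr ⟨hkeq, hkτ⟩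
    constructor
    · -- cov
      intro k hkn hb
      rcases below_child hb with heq | hb'
      · have hpe : pnode t x (k+1) = pnode t x (k0+1) := by rw [heq]; exact hk0y.symm
        have hkk0 : k = k0 := by
          have := pnode_inj hx (by omega) (by omega) hpe
          omega
        subst hkk0; simp [Function.update_self]
      · rw [hyu] at hb'
        have := h.cov k hkn hb'
        by_cases hkeq : k = k0
        · subst hkeq; simp [Function.update_self]
        · rwa [Function.update_of_ne hkeq]
    · -- dom
      intro k τ hkτ
      rcases hget k τ hkτ with ⟨rfl, _⟩ | ⟨_, hkτ'⟩
      · exact hk0n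
      · exact h.dom k τ hkτ'
    · -- mem
      intro k τ hkτ
      rcases hget k τ hkτ with ⟨rfl, rfl⟩ | ⟨_, hkτ'⟩
      · exact hF
      · exact h.mem k τ hkτ'
    · -- ge
      intro k τ hkτ
      rcases hget k τ hkτ with ⟨rfl, rfl⟩ | ⟨_, hkτ'⟩
      · exact hle
      · exact le_trans hle (h.ge k τ hkτ')
    · -- anti
      intro k k' τ τ' hkk hkτ hk'τ
      rcases hget k τ hkτ with ⟨rfl, rfl⟩ | ⟨hne, hkτ'⟩
      · rcases hget k' τ' hk'τ with ⟨rfl, rfl⟩ | ⟨hne', hk'τ''⟩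
        · exact le_rfl
        · exact absurd (hold k' τ' hk'τ'') (by omega)
      · rcases hget k' τ' hk'τ with ⟨rfl, rfl⟩ | ⟨hne', hk'τ''⟩
        · exact h.ge k τ hkτ'
        · exact h.anti k k' τ τ' hkk hkτ' hk'τ''
    · -- sstrict
      intro k k' τ τ' hkk hkτ hbf hk'τ
      rcases hget k τ hkτ with ⟨rfl, rfl⟩ | ⟨hne, hkτ'⟩
      · rcases hget k' τ' hk'τ with ⟨rfl, _⟩ | ⟨_, hk'τ''⟩
        · omega
        · exact absurd (hold k' τ' hk'τ'') (by omega)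
      · rcases hget k' τ' hk'τ with ⟨rfl, rfl⟩ | ⟨hne', hk'τ''⟩
        · exact h.scur k τ hkτ' hbf
        · exact h.sstrict k k' τ τ' hkk hkτ' hbf hk'τ''
    · -- scur
      intro k τ hkτ hbf
      rcases hget k τ hkτ with ⟨rfl, rfl⟩ | ⟨_, hkτ'⟩
      · exact hshrink hbf
      · exact lt_of_le_of_lt hle (h.scur k τ hkτ' hbf)
    · -- feq
      intro k τ hkτ hbt heq
      rcases hget k τ hkτ with ⟨rfl, rfl⟩ | ⟨_, hkτ'⟩
      · exact (hflow hbt).1.symm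
      · have h1 := h.ge k τ hkτ'
        cases b with
        | false =>
          have := hshrink rfl
          omega
        | true =>
          have hF'F := (hflow rfl).1
          subst hF'F
          exact h.feq k τ hkτ' hbt heq
    · -- fprop
      intro k τ hkτ hbt
      rcases hget k τ hkτ with ⟨rfl, rfl⟩ | ⟨_, hkτ'⟩
      · obtain ⟨_, R, E, hFall, htr, helb⟩ := hflow hbt
        exact ⟨R, E, hFall, htr, by rw [hk0y]; exact helb⟩
      · exact h.fprop k τ hkτ' hbt
    · -- ff
      intro k k' τ τ' hkτ hbt hk'τ hbt' heq
      rcases hget k τ hkτ with ⟨rfl, rfl⟩ | ⟨_, hkτ'⟩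
      · rcases hget k' τ' hk'τ with ⟨_, rfl⟩ | ⟨_, hk'τ''⟩
        · rfl
        · cases b with
          | false => simp at hbt
          | true =>
            have hF'F := (hflow rfl).1
            exact (h.feq k' τ' hk'τ'' hbt' heq.symm).symm
      · rcases hget k' τ' hk'τ with ⟨rfl, rfl⟩ | ⟨_, hk'τ''⟩
        · cases b with
          | false => simp at hbt'
          | true =>
            exact h.feq k τ hkτ' hbt heq
        · exact h.ff k k' τ τ' hkτ' hbt hk'τ'' hbt' heq
    · -- dc
      intro k k' hkk hks
      by_cases hkeq : k = k0
      · subst hkeq; simp [Function.update_self]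
      · rw [Function.update_of_ne hkeq]
        by_cases hk'eq : k' = k0
        · exact hcovold k (by omega)
        · rw [Function.update_of_ne hk'eq] at hks
          have := h.dc k k' hkk hks
          exact this
  · -- no new edge is crossed for the first time
    push_neg at hk
    refine ⟨T, ?_⟩
    have hcov : ∀ k, k < t.depth x → below t (pnode t x (k+1)) y → (T k).isSome := by
      intro k hkn hb
      rcases below_child hb with heq | hb'
      · have := hk k hkn heq
        exact Option.ne_none_iff_isSome.mp this
      · rw [hyu] at hb'
        exact h.cov k hkn hb'
    constructor
    · exact hcov
    · exact h.dom
    · exact h.mem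
    · intro k τ hkτ; exact le_trans hle (h.ge k τ hkτ)
    · exact h.anti
    · exact h.sstrict
    · intro k τ hkτ hbf; exact lt_of_le_of_lt hle (h.scur k τ hkτ hbf)
    · intro k τ hkτ hbt heq
      have h1 := h.ge k τ hkτ
      cases b with
      | false =>
        have := hshrink rfl
        omega
      | true =>
        have hF'F := (hflow rfl).1
        subst hF'F
        exact h.feq k τ hkτ hbt heq
    · exact h.fprop
    · exact h.ff
    · exact h.dc

end SIPB
namespace SIPB

lemma walk {Rp : Set ℕ} {D : DLConcept} {t : SITree} {x : ℕ} (hx : x ∈ t.nodes)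
    (hpr : t.parent t.root = t.root) :
    ∀ {u : ℕ} {F : DLConcept}, J Rp D t u F → ∃ T, WData Rp D t x u F T := by
  intro u F h
  induction h with
  | base =>
    refine ⟨fun _ => none, ?_⟩
    constructor
    · intro k hk hb
      exact absurd (below_root hpr hb) (pnode_ne_root (by omega) (by omega))
    all_goals intro k <;> intros <;> simp_all
  | andl hJ ih =>
    obtain ⟨T, h⟩ := ih
    exact ⟨T, wdata_shrink h (csize_lt_of_directSub (DirectSub.andl _ _))⟩
  | andr hJ ih =>
    obtain ⟨T, h⟩ := ih
    exact ⟨T, wdata_shrink h (csize_lt_of_directSub (DirectSub.andr _ _))⟩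
  | orl hJ ih =>
    obtain ⟨T, h⟩ := ih
    exact ⟨T, wdata_shrink h (csize_lt_of_directSub (DirectSub.orl _ _))⟩
  | orr hJ ih =>
    obtain ⟨T, h⟩ := ih
    exact ⟨T, wdata_shrink h (csize_lt_of_directSub (DirectSub.orr _ _))⟩
  | @created y C hy hyr hJ ih =>
    obtain ⟨T, h⟩ := ih
    exact wdata_down (b := false) hx h hyr rfl (J_sub hJ)
      (le_of_lt (csize_lt_of_directSub (DirectSub.ex _ _)))
      (by simp)
      (fun _ => csize_lt_of_directSub (DirectSub.ex _ _))
  | @bodyDown y F hy hyr hJ ih =>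
    obtain ⟨T, h⟩ := ih
    exact wdata_down (b := false) hx h hyr rfl (J_sub hJ)
      (le_of_lt (csize_lt_of_directSub (DirectSub.all _ _)))
      (by simp)
      (fun _ => csize_lt_of_directSub (DirectSub.all _ _))
  | @bodyUp y S F hy hyr helb hJ ih =>
    obtain ⟨T, h⟩ := ih
    exact ⟨T, wdata_shrink (wdata_up h) (csize_lt_of_directSub (DirectSub.all _ _))⟩
  | @transDown y F hy hyr htr hJ ih =>
    obtain ⟨T, h⟩ := ih
    exact wdata_down (b := true) hx h hyr rfl (J_sub hJ) le_rfl
      (fun _ => ⟨rfl, t.elb y, F, rfl, htr, rfl⟩)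
      (by simp)
  | @transUp y S F hy hyr helb htr hJ ih =>
    obtain ⟨T, h⟩ := ih
    exact ⟨T, wdata_up h⟩

end SIPB
namespace SIPB

/-- Extraction of the body of `∃R.C`/`∀R.C`. -/
def bodyOf : DLConcept → DLConcept
  | .ex _ C => C
  | .all _ C => C
  | F => F

section Saturation

variable {Rp : Set ℕ} {t : SITree} {x : ℕ}
variable (hx : x ∈ t.nodes)
variable (hanc : ∀ z, t.Anc z x →
    ¬ (t.ConjApp z ∨ t.DisjApp z ∨ t.AllApp z ∨ t.AllTransApp Rp z))

include hx hanc

/-- ∀-rule saturation in the successor direction, along a path edge. -/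
lemma satDown {k : ℕ} (hk : k < t.depth x) {R : Role} {G : DLConcept}
    (helb : t.elb (pnode t x (k+1)) = R)
    (hG : DLConcept.all R G ∈ t.lab (pnode t x k)) :
    G ∈ t.lab (pnode t x (k+1)) := by
  have hanck : t.Anc (pnode t x k) x := by
    have := anc_pnode hx hk (le_refl (t.depth x))
    rwa [pnode_last] at this
  have hna := hanc _ hanck
  by_contra hnotin
  apply hna
  refine Or.inr (Or.inr (Or.inl ⟨R, G, hG, Or.inl ⟨pnode t x (k+1), ?_, ?_⟩⟩))
  · exact ⟨⟨pnode_mem hx (by omega), pnode_ne_root (by omega) (by omega),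
      pnode_parent hk⟩, helb⟩
  · intro hmem
    exact hnotin (t.blab_sub _ hmem)

/-- ∀₊-rule saturation in the successor direction, along a path edge. -/
lemma satDownTrans {k : ℕ} (hk : k < t.depth x) {R : Role} {G : DLConcept}
    (helb : t.elb (pnode t x (k+1)) = R) (htr : RTrans Rp R)
    (hG : DLConcept.all R G ∈ t.lab (pnode t x k)) :
    DLConcept.all R G ∈ t.lab (pnode t x (k+1)) := by
  have hanck : t.Anc (pnode t x k) x := by
    have := anc_pnode hx hk (le_refl (t.depth x))
    rwa [pnode_last] at this
  have hna := hanc _ hanck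
  by_contra hnotin
  apply hna
  refine Or.inr (Or.inr (Or.inr ⟨R, G, hG, htr, Or.inl ⟨pnode t x (k+1), ?_, ?_⟩⟩))
  · exact ⟨⟨pnode_mem hx (by omega), pnode_ne_root (by omega) (by omega),
      pnode_parent hk⟩, helb⟩
  · intro hmem
    exact hnotin (t.blab_sub _ hmem)

/-- ∀₊-rule saturation in the predecessor direction, along a path edge. -/
lemma satUpTrans {k : ℕ} (hk : k + 1 < t.depth x) {R : Role} {G : DLConcept}
    (helb : t.elb (pnode t x (k+1)) = R) (htr : RTrans Rp R)
    (hG : DLConcept.all R.Inv G ∈ t.lab (pnode t x (k+1))) :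
    DLConcept.all R.Inv G ∈ t.lab (pnode t x k) := by
  have hanck : t.Anc (pnode t x (k+1)) x := by
    have := anc_pnode hx hk (le_refl (t.depth x))
    rwa [pnode_last] at this
  have hna := hanc _ hanck
  by_contra hnotin
  apply hna
  refine Or.inr (Or.inr (Or.inr ⟨R.Inv, G, hG, rtrans_inv htr, Or.inr ⟨pnode t x k, ?_, hnotin⟩⟩))
  refine ⟨⟨pnode_mem hx (by omega), pnode_ne_root (by omega) (by omega), pnode_parent (by omega)⟩, ?_⟩
  rw [helb, inv_inv]

end Saturation

end SIPB
namespace SIPB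

/-- Bound on the length of a maximal transitive-flow run along the path:
within a contiguous family of path edges all labelled by a transitive role
`R`, unblockedness of `x` forces the triple (creation concept, ∀R-part of the
parent label, ∀R⁻-part of the node label) to be injective, and the two
set-components are monotone chains. -/
lemma class_bound {Rp : Set ℕ} {D : DLConcept} {t : SITree} {x : ℕ}
    (hInv : Inv Rp D t) (hx : x ∈ t.nodes) (hnb : ¬ t.Blocked x)
    (hanc : ∀ z, t.Anc z x →
      ¬ (t.ConjApp z ∨ t.DisjApp z ∨ t.AllApp z ∨ t.AllTransApp Rp z))
    {R : Role} (htr : RTrans Rp R) {Kc : Finset ℕ}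
    (hKrange : ∀ k ∈ Kc, k < t.depth x)
    (hKedge : ∀ k ∈ Kc, t.elb (pnode t x (k+1)) = R)
    (hcontig : ∀ ⦃k k'' k' : ℕ⦄, k ∈ Kc → k' ∈ Kc → k ≤ k'' → k'' ≤ k' → k'' ∈ Kc) :
    27 * Kc.card ≤ ((subl D).card + 2) ^ 3 + 27 := by
  classical
  set n := t.depth x with hn
  set m := (subl D).card with hm
  set Wk : ℕ → Finset DLConcept :=
    fun k => (t.lab (pnode t x k)).filter (fun F => ∃ E, F = DLConcept.all R E) with hWk
  set Pp : ℕ → Finset DLConcept :=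
    fun i => (t.lab (pnode t x i)).filter (fun F => ∃ E, F = DLConcept.all R.Inv E) with hPp
  -- chains
  have hWstep : ∀ k ∈ Kc, Wk k ⊆ Wk (k+1) := by
    intro k hk F hF
    rw [hWk, Finset.mem_filter] at hF ⊢
    obtain ⟨hlab, E, rfl⟩ := hF
    exact ⟨satDownTrans hx hanc (hKrange k hk) (hKedge k hk) htr hlab, E, rfl⟩
  have hWchain : ∀ d k, k ∈ Kc → k + d ∈ Kc → Wk k ⊆ Wk (k + d) := by
    intro d
    induction d with
    | zero => intro k _ _; exact fun F hF => hF
    | succ d ih =>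
      intro k hk hk'
      have hmid : k + d ∈ Kc := hcontig hk hk' (by omega) (by omega)
      exact (ih k hk hmid).trans (hWstep (k + d) hmid)
  have hPstep : ∀ k ∈ Kc, k + 1 < n → Pp (k+1) ⊆ Pp k := by
    intro k hk hk1 F hF
    rw [hPp, Finset.mem_filter] at hF ⊢
    obtain ⟨hlab, E, rfl⟩ := hF
    exact ⟨satUpTrans hx hanc hk1 (hKedge k hk) htr hlab, E, rfl⟩
  have hPchain : ∀ d k, k ∈ Kc → k + d ∈ Kc → k + d + 1 < n → Pp (k + d + 1) ⊆ Pp (k+1) := by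
    intro d
    induction d with
    | zero => intro k _ _ _; exact fun F hF => hF
    | succ d ih =>
      intro k hk hk' hlt
      have hmid : k + d + 1 ∈ Kc := hcontig hk hk' (by omega) (by omega)
      have hmid' : k + d ∈ Kc := hcontig hk hk' (by omega) (by omega)
      have h1 : Pp (k + (d+1) + 1) ⊆ Pp (k + d + 1) := by
        have := hPstep (k + d + 1) hmid (by omega)
        have he : k + (d+1) + 1 = (k + d + 1) + 1 := by omega
        rwa [he]
      exact h1.trans (ih k hk hmid' (by omega))
  -- creation concepts
  have hbb' : ∀ k : ℕ, ∃ C₀ : DLConcept, k ∈ Kc →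
      C₀ ∈ t.blab (pnode t x (k+1)) ∧
      DLConcept.ex R C₀ ∈ t.lab (pnode t x k) ∧
      ∀ F ∈ t.blab (pnode t x (k+1)), F = C₀ ∨
        DLConcept.all R F ∈ t.lab (pnode t x k) ∨
        ((∃ E, F = DLConcept.all R E) ∧ F ∈ t.lab (pnode t x k)) := by
    intro k
    by_cases hk : k ∈ Kc
    · have hkn := hKrange k hk
      have hmem : pnode t x (k+1) ∈ t.nodes := pnode_mem hx (by omega)
      have hner : pnode t x (k+1) ≠ t.root := pnode_ne_root (by omega) (by omega)
      obtain ⟨C₀, hC1, hC2, hC3⟩ := hInv.binv _ hmem hner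
      rw [hKedge k hk, pnode_parent hkn] at hC2 hC3
      refine ⟨C₀, fun _ => ⟨hC1, hC2, ?_⟩⟩
      intro F hF
      rcases hC3 F hF with h | h | ⟨_, hsh, hmem'⟩
      · exact Or.inl h
      · exact Or.inr (Or.inl h)
      · exact Or.inr (Or.inr ⟨hsh, hmem'⟩)
    · exact ⟨D, fun h => absurd h hk⟩
  choose Cc hCc using hbb'
  -- no blocking pair
  have hblock : ∀ k k', k ∈ Kc → k' ∈ Kc → k < k' → k' + 1 < n →
      Cc k = Cc k' → Wk k = Wk k' → Pp (k+1) = Pp (k'+1) → False := by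
    intro k k' hk hk' hlt hk'n hCceq hWeq hPeq
    apply hnb
    refine ⟨pnode t x (k'+1), Or.inr ?_, ?_, ?_, pnode t x (k+1), ?_, ?_, ?_⟩
    · have := anc_pnode hx (show k'+1 < n by omega) (le_refl n)
      rwa [pnode_last] at this
    · exact pnode_mem hx (by omega)
    · exact pnode_ne_root (by omega) (by omega)
    · exact anc_pnode hx (by omega) (by omega)
    · -- blab ⊆ lab
      intro F hF
      rw [Finset.mem_coe] at hF ⊢
      rcases (hCc k' hk').2.2 F hF with h | h | ⟨⟨E, rfl⟩, hmem'⟩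
      · subst h
        rw [← hCceq]
        exact t.blab_sub _ (hCc k hk).1
      · have hWmem : DLConcept.all R F ∈ Wk k' := by
          rw [hWk, Finset.mem_filter]; exact ⟨h, F, rfl⟩
        rw [← hWeq, hWk, Finset.mem_filter] at hWmem
        exact satDown hx hanc (hKrange k hk) (hKedge k hk) hWmem.1
      · have hWmem : DLConcept.all R E ∈ Wk k' := by
          rw [hWk, Finset.mem_filter]; exact ⟨hmem', E, rfl⟩
        rw [← hWeq, hWk, Finset.mem_filter] at hWmem
        exact satDownTrans hx hanc (hKrange k hk) (hKedge k hk) htr hWmem.1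
    · -- the ∀Inv(S)-restrictions agree
      rw [hKedge k' hk']
      ext F
      simp only [Set.mem_setOf_eq]
      constructor
      · rintro ⟨h1, C', rfl⟩
        have : DLConcept.all R.Inv C' ∈ Pp (k'+1) := by
          rw [hPp, Finset.mem_filter]; exact ⟨h1, C', rfl⟩
        rw [← hPeq, hPp, Finset.mem_filter] at this
        exact ⟨this.1, C', rfl⟩
      · rintro ⟨h1, C', rfl⟩
        have : DLConcept.all R.Inv C' ∈ Pp (k+1) := by
          rw [hPp, Finset.mem_filter]; exact ⟨h1, C', rfl⟩
        rw [hPeq, hPp, Finset.mem_filter] at this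
        exact ⟨this.1, C', rfl⟩
  -- counting
  set ExRf := (subl D).filter (fun F => ∃ E, F = DLConcept.ex R E) with hExRf
  set AllRf := (subl D).filter (fun F => ∃ E, F = DLConcept.all R E) with hAllRf
  set AllIf := (subl D).filter (fun F => ∃ E, F = DLConcept.all R.Inv E) with hAllIf
  set BodF := ExRf.image bodyOf with hBodF
  set Ksm := Kc.filter (fun k => k + 1 < n) with hKsm
  have hWsub : ∀ k ∈ Kc, Wk k ⊆ AllRf := by
    intro k hk F hF
    rw [hWk, Finset.mem_filter] at hF
    rw [hAllRf, Finset.mem_filter]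
    exact ⟨hInv.labsub _ _ hF.1, hF.2⟩
  have hPsub : ∀ i, Pp i ⊆ AllIf := by
    intro i F hF
    rw [hPp, Finset.mem_filter] at hF
    rw [hAllIf, Finset.mem_filter]
    exact ⟨hInv.labsub _ _ hF.1, hF.2⟩
  have hKsmcard : Ksm.card ≤ BodF.card * ((AllRf.card + 1) * (AllIf.card + 1)) := by
    have := Finset.card_le_card_of_injOn
      (s := Ksm)
      (f := fun k => ((Cc k, (Wk k).card, (Pp (k+1)).card) : DLConcept × ℕ × ℕ))
      (t := BodF ×ˢ (Finset.range (AllRf.card + 1) ×ˢ Finset.range (AllIf.card + 1)))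
      ?_ ?_
    · rwa [Finset.card_product, Finset.card_product, Finset.card_range, Finset.card_range] at this
    · intro k hk
      rw [hKsm, Finset.mem_coe, Finset.mem_filter] at hk
      obtain ⟨hkK, hk1⟩ := hk
      rw [Finset.mem_coe, Finset.mem_product, Finset.mem_product, Finset.mem_range, Finset.mem_range]
      refine ⟨?_, Nat.lt_succ_of_le (Finset.card_le_card (hWsub k hkK)),
        Nat.lt_succ_of_le (Finset.card_le_card (hPsub (k+1)))⟩
      rw [hBodF, Finset.mem_image]
      refine ⟨DLConcept.ex R (Cc k), ?_, rfl⟩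
      rw [hExRf, Finset.mem_filter]
      exact ⟨hInv.labsub _ _ (hCc k hkK).2.1, Cc k, rfl⟩
    · intro k hk k' hk' heq
      rw [Finset.mem_coe, hKsm, Finset.mem_filter] at hk hk'
      obtain ⟨hkK, hk1⟩ := hk
      obtain ⟨hk'K, hk'1⟩ := hk'
      simp only [Prod.mk.injEq] at heq
      obtain ⟨hCeq, hWcard, hPcard⟩ := heq
      by_contra hne
      rcases Nat.lt_or_ge k k' with hlt | hge
      · have hWsube : Wk k ⊆ Wk k' := by
          have := hWchain (k' - k) k hkK (by rwa [show k + (k' - k) = k' by omega])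
          rwa [show k + (k' - k) = k' by omega] at this
        have hWeq : Wk k = Wk k' :=
          Finset.eq_of_subset_of_card_le hWsube (le_of_eq hWcard.symm)
        have hPsube : Pp (k'+1) ⊆ Pp (k+1) := by
          have := hPchain (k' - k) k hkK (by rwa [show k + (k' - k) = k' by omega])
            (by rw [show k + (k' - k) = k' by omega]; omega)
          rwa [show k + (k' - k) = k' by omega] at this
        have hPeq : Pp (k+1) = Pp (k'+1) :=
          (Finset.eq_of_subset_of_card_le hPsube (le_of_eq hPcard)).symm
        exact hblock k k' hkK hk'K hlt hk'1 hCeq hWeq hPeq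
      · have hlt : k' < k := by omega
        have hWsube : Wk k' ⊆ Wk k := by
          have := hWchain (k - k') k' hk'K (by rwa [show k' + (k - k') = k by omega])
          rwa [show k' + (k - k') = k by omega] at this
        have hWeq : Wk k' = Wk k :=
          Finset.eq_of_subset_of_card_le hWsube (le_of_eq hWcard)
        have hPsube : Pp (k+1) ⊆ Pp (k'+1) := by
          have := hPchain (k - k') k' hk'K (by rwa [show k' + (k - k') = k by omega])
            (by rw [show k' + (k - k') = k by omega]; omega)
          rwa [show k' + (k - k') = k by omega] at this
        have hPeq : Pp (k'+1) = Pp (k+1) :=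
          (Finset.eq_of_subset_of_card_le hPsube (le_of_eq hPcard.symm)).symm
        exact hblock k' k hk'K hkK hlt hk1 hCeq.symm hWeq hPeq
  -- disjointness and arithmetic
  have hdisj1 : Disjoint ExRf AllRf := by
    rw [Finset.disjoint_left]
    rintro F hF1 hF2
    rw [hExRf, Finset.mem_filter] at hF1
    rw [hAllRf, Finset.mem_filter] at hF2
    obtain ⟨_, E1, rfl⟩ := hF1
    obtain ⟨_, E2, hE2⟩ := hF2
    exact absurd hE2 (by simp)
  have hdisj2 : Disjoint (ExRf ∪ AllRf) AllIf := by
    rw [Finset.disjoint_left]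
    rintro F hF1 hF2
    rw [hAllIf, Finset.mem_filter] at hF2
    obtain ⟨_, E3, rfl⟩ := hF2
    rw [Finset.mem_union] at hF1
    rcases hF1 with h | h
    · rw [hExRf, Finset.mem_filter] at h
      obtain ⟨_, E1, hE⟩ := h
      exact absurd hE (by simp)
    · rw [hAllRf, Finset.mem_filter] at h
      obtain ⟨_, E2, hE⟩ := h
      injection hE with h1 h2
      exact inv_ne R h1
  have hsum : ExRf.card + AllRf.card + AllIf.card ≤ m := by
    have h1 : (ExRf ∪ AllRf ∪ AllIf).card = ExRf.card + AllRf.card + AllIf.card := by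
      rw [Finset.card_union_of_disjoint hdisj2, Finset.card_union_of_disjoint hdisj1]
    have h2 : ExRf ∪ AllRf ∪ AllIf ⊆ subl D := by
      intro F hF
      rw [Finset.mem_union, Finset.mem_union] at hF
      rcases hF with (h | h) | h
      · rw [hExRf, Finset.mem_filter] at h; exact h.1
      · rw [hAllRf, Finset.mem_filter] at h; exact h.1
      · rw [hAllIf, Finset.mem_filter] at h; exact h.1
    rw [← h1]
    exact Finset.card_le_card h2
  have hKcsplit : Kc.card ≤ Ksm.card + 1 := by
    have h1 : Kc.filter (fun k => ¬ (k + 1 < n)) ⊆ {n - 1} := by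
      intro k hk
      rw [Finset.mem_filter] at hk
      have := hKrange k hk.1
      rw [Finset.mem_singleton]
      omega
    have h3 : (Kc.filter (fun k => ¬ (k + 1 < n))).card ≤ 1 := by
      calc (Kc.filter (fun k => ¬ (k + 1 < n))).card ≤ ({n-1} : Finset ℕ).card :=
            Finset.card_le_card h1
        _ = 1 := Finset.card_singleton _
    have h2' : Ksm.card + (Kc.filter (fun k => ¬ (k + 1 < n))).card = Kc.card := by
      rw [hKsm]
      exact Finset.card_filter_add_card_filter_not (s := Kc) (p := fun k => k + 1 < n)
    omega
  have hamgm : 27 * (BodF.card * ((AllRf.card + 1) * (AllIf.card + 1))) ≤ (m + 2)^3 := by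
    have h0 : BodF.card ≤ ExRf.card := Finset.card_image_le
    have h1 : 27 * (BodF.card * ((AllRf.card + 1) * (AllIf.card + 1))) ≤
        (BodF.card + (AllRf.card + 1) + (AllIf.card + 1))^3 := by
      have := amgm BodF.card (AllRf.card + 1) (AllIf.card + 1)
      calc 27 * (BodF.card * ((AllRf.card + 1) * (AllIf.card + 1)))
          = 27 * (BodF.card * (AllRf.card + 1) * (AllIf.card + 1)) := by ring
        _ ≤ _ := this
    have h2 : BodF.card + (AllRf.card + 1) + (AllIf.card + 1) ≤ m + 2 := by omega
    exact h1.trans (Nat.pow_le_pow_left h2 3)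
  calc 27 * Kc.card ≤ 27 * (Ksm.card + 1) := by omega
    _ = 27 * Ksm.card + 27 := by ring
    _ ≤ 27 * (BodF.card * ((AllRf.card + 1) * (AllIf.card + 1))) + 27 := by
        have := hKsmcard; omega
    _ ≤ (m + 2)^3 + 27 := by omega

end SIPB
namespace SIPB

/-- If the ∃-rule can fire at `x` (in particular `x` is unblocked and all its
ancestors are saturated), then the depth of `x` is strictly below `m⁴`. -/
lemma fire_bound {Rp : Set ℕ} {D : DLConcept} {t : SITree} {x : ℕ} {S : Role}
    {C : DLConcept} (hInv : Inv Rp D t) (hx : x ∈ t.nodes)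
    (hC : DLConcept.ex S C ∈ t.lab x) (hnb : ¬ t.Blocked x)
    (hanc : ∀ z, t.Anc z x →
      ¬ (t.ConjApp z ∨ t.DisjApp z ∨ t.AllApp z ∨ t.AllTransApp Rp z)) :
    t.depth x + 1 ≤ (subl D).card ^ 4 := by
  classical
  set n := t.depth x with hn
  set m := (subl D).card with hm
  -- m ≥ 2
  have hexsub : DLConcept.ex S C ∈ subl D := hInv.labsub x _ hC
  have hCsub : C ∈ subl D := subl_closed hexsub (DirectSub.ex S C)
  have hm2 : 2 ≤ m := by
    have hne : C ≠ DLConcept.ex S C := by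
      intro h
      have := csize_lt_of_directSub (DirectSub.ex S C)
      rw [← h] at this
      omega
    have hsub : ({C, DLConcept.ex S C} : Finset DLConcept) ⊆ subl D := by
      intro F hF
      rcases Finset.mem_insert.mp hF with rfl | hF
      · exact hCsub
      · rw [Finset.mem_singleton] at hF; subst hF; exact hexsub
    have hcard : ({C, DLConcept.ex S C} : Finset DLConcept).card = 2 := by
      rw [Finset.card_insert_of_notMem (by simpa using hne), Finset.card_singleton]
    calc 2 = ({C, DLConcept.ex S C} : Finset DLConcept).card := hcard.symm
      _ ≤ m := Finset.card_le_card hsub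
  -- the provenance walk for the firing concept
  obtain ⟨T, hW⟩ := walk hx hInv.prootp (hInv.jinv x _ hC)
  have htag : ∀ k, k < n → ∃ τ, T k = some τ := by
    intro k hk
    have hb : below t (pnode t x (k+1)) x := by
      have := below_pnode (t := t) (x := x) (show k+1 ≤ n by omega) (le_refl n)
      rwa [pnode_last] at this
    exact Option.isSome_iff_exists.mp (hW.cov k hk hb)
  set tagf : ℕ → DLConcept × Bool := fun k => (T k).getD (D, false) with htagfdef
  have htagf : ∀ k, k < n → T k = some (tagf k) := by
    intro k hk
    obtain ⟨τ, hτ⟩ := htag k hk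
    rw [htagfdef]; simp [hτ]
  set SS := (Finset.range n).filter (fun k => ¬ (tagf k).2 = true) with hSS
  set FF := (Finset.range n).filter (fun k => (tagf k).2 = true) with hFF
  have hsplit : FF.card + SS.card = n := by
    rw [hFF, hSS]
    have := Finset.card_filter_add_card_filter_not (s := Finset.range n)
      (p := fun k => (tagf k).2 = true)
    rw [Finset.card_range] at this
    exact this
  -- the shrink-tagged edges are at most m
  have hSScard : SS.card ≤ m := by
    have h1 : SS.card ≤ ((subl D).image csize).card := by
      apply Finset.card_le_card_of_injOn (f := fun k => csize (tagf k).1)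
      · intro k hk
        rw [hSS, Finset.mem_coe, Finset.mem_filter, Finset.mem_range] at hk
        exact Finset.mem_image_of_mem csize (hW.mem k _ (htagf k hk.1))
      · intro k hk k' hk' heq
        rw [Finset.mem_coe, hSS, Finset.mem_filter, Finset.mem_range] at hk hk'
        by_contra hne
        have hbf : (tagf k).2 = false := by simpa using hk.2
        have hbf' : (tagf k').2 = false := by simpa using hk'.2
        rcases Nat.lt_or_ge k k' with hlt | hge
        · have := hW.sstrict k k' _ _ hlt (htagf k hk.1) hbf (htagf k' hk'.1)
          simp only at heq
          omega
        · have hlt : k' < k := by omega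
          have := hW.sstrict k' k _ _ hlt (htagf k' hk'.1) hbf' (htagf k hk.1)
          simp only at heq
          omega
    exact h1.trans Finset.card_image_le
  -- flow classes
  set V := FF.image (fun k => (tagf k).1) with hV
  have hVcard : V.card ≤ m := by
    apply Finset.card_le_card (t := subl D)
    intro F hF
    rw [hV, Finset.mem_image] at hF
    obtain ⟨k, hk, rfl⟩ := hF
    rw [hFF, Finset.mem_filter, Finset.mem_range] at hk
    exact hW.mem k _ (htagf k hk.1)
  have hFFsum : FF.card = ∑ τ ∈ V, (FF.filter (fun k => (tagf k).1 = τ)).card := by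
    rw [hV]
    exact Finset.card_eq_sum_card_image _ _
  have hclass : ∀ τ ∈ V, 27 * (FF.filter (fun k => (tagf k).1 = τ)).card ≤ (m+2)^3 + 27 := by
    intro τ hτV
    rw [hV, Finset.mem_image] at hτV
    obtain ⟨k₀, hk₀, hτval⟩ := hτV
    rw [hFF, Finset.mem_filter, Finset.mem_range] at hk₀
    have hτval' : (tagf k₀).1 = τ := hτval
    obtain ⟨R, E, hτall, htrR, _⟩ := hW.fprop k₀ _ (htagf k₀ hk₀.1) hk₀.2
    have hKmem : ∀ k, k ∈ FF.filter (fun k => (tagf k).1 = τ) →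
        (k < n ∧ (tagf k).2 = true ∧ (tagf k).1 = τ) := by
      intro k hk
      rw [Finset.mem_filter, hFF, Finset.mem_filter, Finset.mem_range] at hk
      exact ⟨hk.1.1, hk.1.2, hk.2⟩
    apply class_bound hInv hx hnb hanc htrR
    · intro k hk; exact (hKmem k hk).1
    · intro k hk
      obtain ⟨hkn, hkb, hkv⟩ := hKmem k hk
      obtain ⟨R', E', hall', _, helb'⟩ := hW.fprop k _ (htagf k hkn) hkb
      rw [hkv, ← hτval', hτall] at hall'
      injection hall' with h1 h2
      rw [helb', ← h1]
    · intro k k'' k' hk hk' hle hle'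
      obtain ⟨hkn, hkb, hkv⟩ := hKmem k hk
      obtain ⟨hk'n, hk'b, hk'v⟩ := hKmem k' hk'
      have hk''n : k'' < n := by omega
      have hsz1 := hW.anti k k'' _ _ hle (htagf k hkn) (htagf k'' hk''n)
      have hsz2 := hW.anti k'' k' _ _ hle' (htagf k'' hk''n) (htagf k' hk'n)
      have hszeq : csize (tagf k'').1 = csize τ := by
        rw [hkv] at hsz1
        rw [hk'v] at hsz2
        omega
      by_cases hb : (tagf k'').2 = true
      · have := hW.ff k'' k' _ _ (htagf k'' hk''n) hb (htagf k' hk'n) hk'b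
          (by rw [hszeq, ← hk'v])
        rw [Finset.mem_filter, hFF, Finset.mem_filter, Finset.mem_range]
        exact ⟨⟨hk''n, hb⟩, by rw [this, hk'v]⟩
      · have hbf : (tagf k'').2 = false := by simpa using hb
        have hne : k'' ≠ k' := by
          intro h; rw [h] at hbf; rw [hk'b] at hbf; exact absurd hbf (by simp)
        have hlt : k'' < k' := by omega
        have := hW.sstrict k'' k' _ _ hlt (htagf k'' hk''n) hbf (htagf k' hk'n)
        rw [hszeq, ← hk'v] at this
        omega
  have h27 : 27 * FF.card ≤ m * ((m+2)^3 + 27) := by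
    calc 27 * FF.card = ∑ τ ∈ V, 27 * (FF.filter (fun k => (tagf k).1 = τ)).card := by
          rw [hFFsum, Finset.mul_sum]
      _ ≤ ∑ _τ ∈ V, ((m+2)^3 + 27) := Finset.sum_le_sum hclass
      _ = V.card * ((m+2)^3 + 27) := by rw [Finset.sum_const, smul_eq_mul]
      _ ≤ m * ((m+2)^3 + 27) := Nat.mul_le_mul_right _ hVcard
  have hfin : 27 * n ≤ 54 * m + m * (m+2)^3 := by
    have h1 : 27 * n = 27 * FF.card + 27 * SS.card := by omega
    have h2 : 27 * SS.card ≤ 27 * m := by omega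
    calc 27 * n = 27 * FF.card + 27 * SS.card := h1
      _ ≤ m * ((m+2)^3 + 27) + 27 * m := Nat.add_le_add h27 h2
      _ = 54 * m + m * (m+2)^3 := by ring
  exact final_arith hm2 hfin

end SIPB
namespace SIPB

/-- Preservation of the creation-label invariant when only `lab` grows. -/
lemma binv_mono {Rp : Set ℕ} {t t' : SITree}
    (hn : t'.nodes = t.nodes) (hr : t'.root = t.root)
    (hp : t'.parent = t.parent) (he : t'.elb = t.elb) (hb : t'.blab = t.blab)
    (hl : ∀ w, t.lab w ⊆ t'.lab w)
    (hbinv : ∀ y ∈ t.nodes, y ≠ t.root → ∃ C ∈ t.blab y,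
      DLConcept.ex (t.elb y) C ∈ t.lab (t.parent y) ∧
      ∀ F ∈ t.blab y, F = C ∨ DLConcept.all (t.elb y) F ∈ t.lab (t.parent y) ∨
        (RTrans Rp (t.elb y) ∧ (∃ E, F = DLConcept.all (t.elb y) E) ∧
          F ∈ t.lab (t.parent y))) :
    ∀ y ∈ t'.nodes, y ≠ t'.root → ∃ C ∈ t'.blab y,
      DLConcept.ex (t'.elb y) C ∈ t'.lab (t'.parent y) ∧
      ∀ F ∈ t'.blab y, F = C ∨ DLConcept.all (t'.elb y) F ∈ t'.lab (t'.parent y) ∨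
        (RTrans Rp (t'.elb y) ∧ (∃ E, F = DLConcept.all (t'.elb y) E) ∧
          F ∈ t'.lab (t'.parent y)) := by
  intro y hy hyr
  rw [hn] at hy
  rw [hr] at hyr
  obtain ⟨C, hC1, hC2, hC3⟩ := hbinv y hy hyr
  rw [hb, hp, he]
  refine ⟨C, hC1, hl _ hC2, ?_⟩
  intro F hF
  rcases hC3 F hF with h | h | ⟨h1, h2, h3⟩
  · exact Or.inl h
  · exact Or.inr (Or.inl (hl _ h))
  · exact Or.inr (Or.inr ⟨h1, h2, hl _ h3⟩)

lemma update_lab_mono {t : SITree} {z : ℕ} {L : Finset DLConcept}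
    {lab' : ℕ → Finset DLConcept} (hl : lab' = Function.update t.lab z L)
    (hsub : t.lab z ⊆ L) : ∀ w, t.lab w ⊆ lab' w := by
  intro w F hF
  rw [hl]
  by_cases hw : w = z
  · subst hw; rw [Function.update_self]; exact hsub hF
  · rw [Function.update_of_ne hw]; exact hF

/-- Preservation of the full invariant by one expansion step. -/
lemma inv_preserved {Rp : Set ℕ} {D : DLConcept} {t t' : SITree}
    (h : SIStep Rp t t') (hInv : Inv Rp D t) : Inv Rp D t' := by
  classical
  cases h with
  | conj x C₁ C₂ hx hC hnew hn hr hp hl hb he =>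
    have hsub : t.lab x ⊆ t.lab x ∪ {C₁, C₂} := Finset.subset_union_left
    have hlm : ∀ w, t.lab w ⊆ t'.lab w := update_lab_mono hl hsub
    have hlift : ∀ {u F}, J Rp D t u F → J Rp D t' u F :=
      J_mono (fun w hw => by rw [hn]; exact hw) hr (fun w _ => by rw [hp])
        (fun w _ => by rw [he])
    refine ⟨?_, ?_, ?_, ?_, ?_⟩
    · intro w F hF
      rw [hl] at hF
      by_cases hw : w = x
      · subst hw; rw [Function.update_self, Finset.mem_union] at hF
        rcases hF with hF | hF
        · exact hInv.labsub _ _ hF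
        · rcases Finset.mem_insert.mp hF with rfl | hF
          · exact subl_closed (hInv.labsub _ _ hC) (DirectSub.andl _ _)
          · rw [Finset.mem_singleton] at hF; subst hF
            exact subl_closed (hInv.labsub _ _ hC) (DirectSub.andr _ _)
      · rw [Function.update_of_ne hw] at hF; exact hInv.labsub _ _ hF
    · intro w hw
      rw [hn] at hw
      rw [hl, Function.update_of_ne (by rintro rfl; exact hw hx)]
      exact hInv.junklab _ hw
    · rw [hp, hr]; exact hInv.prootp
    · exact binv_mono hn hr hp he hb hlm hInv.binv
    · intro w F hF
      rw [hl] at hF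
      by_cases hw : w = x
      · subst hw; rw [Function.update_self, Finset.mem_union] at hF
        rcases hF with hF | hF
        · exact hlift (hInv.jinv _ _ hF)
        · rcases Finset.mem_insert.mp hF with rfl | hF
          · exact J.andl (hlift (hInv.jinv _ _ hC))
          · rw [Finset.mem_singleton] at hF; subst hF
            exact J.andr (hlift (hInv.jinv _ _ hC))
      · rw [Function.update_of_ne hw] at hF; exact hlift (hInv.jinv _ _ hF)
  | disj x C₁ C₂ E hx hC hnew hE hn hr hp hl hb he =>
    have hsub : t.lab x ⊆ insert E (t.lab x) := Finset.subset_insert _ _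
    have hlm : ∀ w, t.lab w ⊆ t'.lab w := update_lab_mono hl hsub
    have hlift : ∀ {u F}, J Rp D t u F → J Rp D t' u F :=
      J_mono (fun w hw => by rw [hn]; exact hw) hr (fun w _ => by rw [hp])
        (fun w _ => by rw [he])
    refine ⟨?_, ?_, ?_, ?_, ?_⟩
    · intro w F hF
      rw [hl] at hF
      by_cases hw : w = x
      · subst hw; rw [Function.update_self] at hF
        rcases Finset.mem_insert.mp hF with rfl | hF
        · rcases hE with rfl | rfl
          · exact subl_closed (hInv.labsub _ _ hC) (DirectSub.orl _ _)
          · exact subl_closed (hInv.labsub _ _ hC) (DirectSub.orr _ _)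
        · exact hInv.labsub _ _ hF
      · rw [Function.update_of_ne hw] at hF; exact hInv.labsub _ _ hF
    · intro w hw
      rw [hn] at hw
      rw [hl, Function.update_of_ne (by rintro rfl; exact hw hx)]
      exact hInv.junklab _ hw
    · rw [hp, hr]; exact hInv.prootp
    · exact binv_mono hn hr hp he hb hlm hInv.binv
    · intro w F hF
      rw [hl] at hF
      by_cases hw : w = x
      · subst hw; rw [Function.update_self] at hF
        rcases Finset.mem_insert.mp hF with rfl | hF
        · rcases hE with rfl | rfl
          · exact J.orl (hlift (hInv.jinv _ _ hC))
          · exact J.orr (hlift (hInv.jinv _ _ hC))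
        · exact hlift (hInv.jinv _ _ hF)
      · rw [Function.update_of_ne hw] at hF; exact hlift (hInv.jinv _ _ hF)
  | allSucc x y S C hx hC hy hnew hn hr hp hl hb he =>
    obtain ⟨⟨hyn, hyr, hypar⟩, hyelb⟩ := hy
    have hsub : t.lab y ⊆ insert C (t.lab y) := Finset.subset_insert _ _
    have hlm : ∀ w, t.lab w ⊆ t'.lab w := update_lab_mono hl hsub
    have hlift : ∀ {u F}, J Rp D t u F → J Rp D t' u F :=
      J_mono (fun w hw => by rw [hn]; exact hw) hr (fun w _ => by rw [hp])
        (fun w _ => by rw [he])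
    have hxy : x ≠ y := by
      rintro rfl
      exact noselfparent hyn hyr hypar
    refine ⟨?_, ?_, ?_, ?_, ?_⟩
    · intro w F hF
      rw [hl] at hF
      by_cases hw : w = y
      · subst hw; rw [Function.update_self] at hF
        rcases Finset.mem_insert.mp hF with rfl | hF
        · exact subl_closed (hInv.labsub _ _ hC) (DirectSub.all _ _)
        · exact hInv.labsub _ _ hF
      · rw [Function.update_of_ne hw] at hF; exact hInv.labsub _ _ hF
    · intro w hw
      rw [hn] at hw
      rw [hl, Function.update_of_ne (by rintro rfl; exact hw hyn)]
      exact hInv.junklab _ hw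
    · rw [hp, hr]; exact hInv.prootp
    · -- binv with blab updated at y
      intro w hw hwr
      rw [hn] at hw
      rw [hr] at hwr
      obtain ⟨C₀, hC1, hC2, hC3⟩ := hInv.binv w hw hwr
      rw [hb, hp, he]
      by_cases hwy : w = y
      · subst hwy
        rw [Function.update_self]
        refine ⟨C₀, Finset.mem_insert_of_mem hC1, hlm _ hC2, ?_⟩
        intro F hF
        rcases Finset.mem_insert.mp hF with rfl | hF
        · refine Or.inr (Or.inl ?_)
          rw [hyelb, hypar]
          exact hlm _ hC
        · rcases hC3 F hF with h | h | ⟨h1, h2, h3⟩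
          · exact Or.inl h
          · exact Or.inr (Or.inl (hlm _ h))
          · exact Or.inr (Or.inr ⟨h1, h2, hlm _ h3⟩)
      · rw [Function.update_of_ne hwy]
        refine ⟨C₀, hC1, hlm _ hC2, ?_⟩
        intro F hF
        rcases hC3 F hF with h | h | ⟨h1, h2, h3⟩
        · exact Or.inl h
        · exact Or.inr (Or.inl (hlm _ h))
        · exact Or.inr (Or.inr ⟨h1, h2, hlm _ h3⟩)
    · intro w F hF
      rw [hl] at hF
      by_cases hw : w = y
      · subst hw; rw [Function.update_self] at hF
        rcases Finset.mem_insert.mp hF with rfl | hF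
        · have hj : J Rp D t' (t'.parent w) (DLConcept.all (t'.elb w) F) := by
            rw [hp, he, hypar, hyelb]
            exact hlift (hInv.jinv _ _ hC)
          exact J.bodyDown (by rw [hn]; exact hyn) (by rw [hr]; exact hyr) hj
        · exact hlift (hInv.jinv _ _ hF)
      · rw [Function.update_of_ne hw] at hF; exact hlift (hInv.jinv _ _ hF)
  | allPred x y S C hx hC hy hnew hn hr hp hl hb he =>
    obtain ⟨⟨hxn, hxr, hxpar⟩, hxelb⟩ := hy
    have hyn : y ∈ t.nodes := by
      rw [← hxpar]; exact t.parent_mem x hxn hxr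
    have hsub : t.lab y ⊆ insert C (t.lab y) := Finset.subset_insert _ _
    have hlm : ∀ w, t.lab w ⊆ t'.lab w := update_lab_mono hl hsub
    have hlift : ∀ {u F}, J Rp D t u F → J Rp D t' u F :=
      J_mono (fun w hw => by rw [hn]; exact hw) hr (fun w _ => by rw [hp])
        (fun w _ => by rw [he])
    refine ⟨?_, ?_, ?_, ?_, ?_⟩
    · intro w F hF
      rw [hl] at hF
      by_cases hw : w = y
      · subst hw; rw [Function.update_self] at hF
        rcases Finset.mem_insert.mp hF with rfl | hF
        · exact subl_closed (hInv.labsub _ _ hC) (DirectSub.all _ _)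
        · exact hInv.labsub _ _ hF
      · rw [Function.update_of_ne hw] at hF; exact hInv.labsub _ _ hF
    · intro w hw
      rw [hn] at hw
      rw [hl, Function.update_of_ne (by rintro rfl; exact hw hyn)]
      exact hInv.junklab _ hw
    · rw [hp, hr]; exact hInv.prootp
    · exact binv_mono hn hr hp he hb hlm hInv.binv
    · intro w F hF
      rw [hl] at hF
      by_cases hw : w = y
      · subst hw; rw [Function.update_self] at hF
        rcases Finset.mem_insert.mp hF with rfl | hF
        · have hj : J Rp D t' x (DLConcept.all S F) := hlift (hInv.jinv _ _ hC)
          have := J.bodyUp (Rp := Rp) (D := D) (t := t') (S := S)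
            (by rw [hn]; exact hxn) (by rw [hr]; exact hxr)
            (by rw [he]; exact hxelb) hj
          rwa [hp, hxpar] at this
        · exact hlift (hInv.jinv _ _ hF)
      · rw [Function.update_of_ne hw] at hF; exact hlift (hInv.jinv _ _ hF)
  | allTransSucc x y S C hx hC htr hy hnew hn hr hp hl hb he =>
    obtain ⟨⟨hyn, hyr, hypar⟩, hyelb⟩ := hy
    have hsub : t.lab y ⊆ insert (DLConcept.all S C) (t.lab y) := Finset.subset_insert _ _
    have hlm : ∀ w, t.lab w ⊆ t'.lab w := update_lab_mono hl hsub
    have hlift : ∀ {u F}, J Rp D t u F → J Rp D t' u F :=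
      J_mono (fun w hw => by rw [hn]; exact hw) hr (fun w _ => by rw [hp])
        (fun w _ => by rw [he])
    refine ⟨?_, ?_, ?_, ?_, ?_⟩
    · intro w F hF
      rw [hl] at hF
      by_cases hw : w = y
      · subst hw; rw [Function.update_self] at hF
        rcases Finset.mem_insert.mp hF with rfl | hF
        · exact hInv.labsub _ _ hC
        · exact hInv.labsub _ _ hF
      · rw [Function.update_of_ne hw] at hF; exact hInv.labsub _ _ hF
    · intro w hw
      rw [hn] at hw
      rw [hl, Function.update_of_ne (by rintro rfl; exact hw hyn)]
      exact hInv.junklab _ hw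
    · rw [hp, hr]; exact hInv.prootp
    · intro w hw hwr
      rw [hn] at hw
      rw [hr] at hwr
      obtain ⟨C₀, hC1, hC2, hC3⟩ := hInv.binv w hw hwr
      rw [hb, hp, he]
      by_cases hwy : w = y
      · subst hwy
        rw [Function.update_self]
        refine ⟨C₀, Finset.mem_insert_of_mem hC1, hlm _ hC2, ?_⟩
        intro F hF
        rcases Finset.mem_insert.mp hF with rfl | hF
        · refine Or.inr (Or.inr ?_)
          rw [hyelb, hypar]
          exact ⟨htr, ⟨C, rfl⟩, hlm _ hC⟩
        · rcases hC3 F hF with h | h | ⟨h1, h2, h3⟩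
          · exact Or.inl h
          · exact Or.inr (Or.inl (hlm _ h))
          · exact Or.inr (Or.inr ⟨h1, h2, hlm _ h3⟩)
      · rw [Function.update_of_ne hwy]
        refine ⟨C₀, hC1, hlm _ hC2, ?_⟩
        intro F hF
        rcases hC3 F hF with h | h | ⟨h1, h2, h3⟩
        · exact Or.inl h
        · exact Or.inr (Or.inl (hlm _ h))
        · exact Or.inr (Or.inr ⟨h1, h2, hlm _ h3⟩)
    · intro w F hF
      rw [hl] at hF
      by_cases hw : w = y
      · subst hw; rw [Function.update_self] at hF
        rcases Finset.mem_insert.mp hF with rfl | hF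
        · have hj : J Rp D t' (t'.parent w) (DLConcept.all (t'.elb w) C) := by
            rw [hp, he, hypar, hyelb]
            exact hlift (hInv.jinv _ _ hC)
          have := J.transDown (Rp := Rp) (D := D) (t := t')
            (by rw [hn]; exact hyn) (by rw [hr]; exact hyr)
            (by rw [he, hyelb]; exact htr) hj
          rwa [he, hyelb] at this
        · exact hlift (hInv.jinv _ _ hF)
      · rw [Function.update_of_ne hw] at hF; exact hlift (hInv.jinv _ _ hF)
  | allTransPred x y S C hx hC htr hy hnew hn hr hp hl hb he =>
    obtain ⟨⟨hxn, hxr, hxpar⟩, hxelb⟩ := hy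
    have hyn : y ∈ t.nodes := by
      rw [← hxpar]; exact t.parent_mem x hxn hxr
    have hsub : t.lab y ⊆ insert (DLConcept.all S C) (t.lab y) := Finset.subset_insert _ _
    have hlm : ∀ w, t.lab w ⊆ t'.lab w := update_lab_mono hl hsub
    have hlift : ∀ {u F}, J Rp D t u F → J Rp D t' u F :=
      J_mono (fun w hw => by rw [hn]; exact hw) hr (fun w _ => by rw [hp])
        (fun w _ => by rw [he])
    refine ⟨?_, ?_, ?_, ?_, ?_⟩
    · intro w F hF
      rw [hl] at hF
      by_cases hw : w = y
      · subst hw; rw [Function.update_self] at hF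
        rcases Finset.mem_insert.mp hF with rfl | hF
        · exact hInv.labsub _ _ hC
        · exact hInv.labsub _ _ hF
      · rw [Function.update_of_ne hw] at hF; exact hInv.labsub _ _ hF
    · intro w hw
      rw [hn] at hw
      rw [hl, Function.update_of_ne (by rintro rfl; exact hw hyn)]
      exact hInv.junklab _ hw
    · rw [hp, hr]; exact hInv.prootp
    · exact binv_mono hn hr hp he hb hlm hInv.binv
    · intro w F hF
      rw [hl] at hF
      by_cases hw : w = y
      · subst hw; rw [Function.update_self] at hF
        rcases Finset.mem_insert.mp hF with rfl | hF
        · have hj : J Rp D t' x (DLConcept.all S C) := hlift (hInv.jinv _ _ hC)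
          have := J.transUp (Rp := Rp) (D := D) (t := t') (S := S)
            (by rw [hn]; exact hxn) (by rw [hr]; exact hxr)
            (by rw [he]; exact hxelb) htr hj
          rwa [hp, hxpar] at this
        · exact hlift (hInv.jinv _ _ hF)
      · rw [Function.update_of_ne hw] at hF; exact hlift (hInv.jinv _ _ hF)
  | exists_ x y S C hx hC hnb hanc hnew hy hn hr hp hl hb he =>
    have hyr : y ≠ t.root := by rintro rfl; exact hy t.root_mem
    have hxy : x ≠ y := by rintro rfl; exact hy hx
    have hlift : ∀ {u F}, J Rp D t u F → J Rp D t' u F :=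
      J_mono (fun w hw => by rw [hn]; exact Finset.mem_insert_of_mem hw) hr
        (fun w hw => by rw [hp]; exact Function.update_of_ne (by rintro rfl; exact hy hw) _ _)
        (fun w hw => by rw [he]; exact Function.update_of_ne (by rintro rfl; exact hy hw) _ _)
    have hlm : ∀ w, t.lab w ⊆ t'.lab w := by
      intro w F hF
      rw [hl]
      by_cases hw : w = y
      · subst hw; rw [hInv.junklab _ hy] at hF; exact absurd hF (by simp)
      · rw [Function.update_of_ne hw]; exact hF
    refine ⟨?_, ?_, ?_, ?_, ?_⟩
    · intro w F hF
      rw [hl] at hF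
      by_cases hw : w = y
      · subst hw; rw [Function.update_self, Finset.mem_singleton] at hF; subst hF
        exact subl_closed (hInv.labsub _ _ hC) (DirectSub.ex _ _)
      · rw [Function.update_of_ne hw] at hF; exact hInv.labsub _ _ hF
    · intro w hw
      rw [hn, Finset.mem_insert] at hw
      push_neg at hw
      rw [hl, Function.update_of_ne hw.1]
      exact hInv.junklab _ (hw.2)
    · rw [hp, hr]
      rw [Function.update_of_ne (by rintro h; exact hy (h ▸ t.root_mem))]
      exact hInv.prootp
    · intro w hw hwr
      rw [hn, Finset.mem_insert] at hw
      rw [hr] at hwr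
      rcases hw with rfl | hw
      · -- the new node
        refine ⟨C, ?_, ?_, ?_⟩
        · rw [hb, Function.update_self]; exact Finset.mem_singleton_self C
        · rw [he, hp, Function.update_self, Function.update_self, hl,
            Function.update_of_ne hxy]
          exact hC
        · intro F hF
          rw [hb, Function.update_self, Finset.mem_singleton] at hF
          exact Or.inl hF
      · -- old nodes
        obtain ⟨C₀, hC1, hC2, hC3⟩ := hInv.binv w hw hwr
        have hwy : w ≠ y := by rintro rfl; exact hy hw
        have hpw : t.parent w ≠ y := by
          rintro h
          exact hy (h ▸ t.parent_mem w hw hwr)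
        rw [hb, Function.update_of_ne hwy, hp, Function.update_of_ne hwy,
          he, Function.update_of_ne hwy]
        refine ⟨C₀, hC1, hlm _ hC2, ?_⟩
        intro F hF
        rcases hC3 F hF with h | h | ⟨h1, h2, h3⟩
        · exact Or.inl h
        · exact Or.inr (Or.inl (hlm _ h))
        · exact Or.inr (Or.inr ⟨h1, h2, hlm _ h3⟩)
    · intro w F hF
      rw [hl] at hF
      by_cases hw : w = y
      · subst hw; rw [Function.update_self, Finset.mem_singleton] at hF; subst hF
        have hyn' : w ∈ t'.nodes := by rw [hn]; exact Finset.mem_insert_self _ _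
        have hyr' : w ≠ t'.root := by rw [hr]; exact hyr
        have hj : J Rp D t' (t'.parent w) (DLConcept.ex (t'.elb w) F) := by
          rw [hp, he, Function.update_self, Function.update_self]
          exact hlift (hInv.jinv _ _ hC)
        exact J.created hyn' hyr' hj
      · rw [Function.update_of_ne hw] at hF; exact hlift (hInv.jinv _ _ hF)

end SIPB
namespace SIPB

lemma depth_eq_of_eq {t t' : SITree} (hp : t'.parent = t.parent)
    (hr : t'.root = t.root) (z : ℕ) : t'.depth z = t.depth z := by
  unfold SITree.depth
  rw [hp, hr]

lemma exists_iter {t t' : SITree} {y x : ℕ} (hy : y ∉ t.nodes)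
    (hpr : t.parent t.root = t.root)
    (hp : t'.parent = Function.update t.parent y x) {z : ℕ} (hz : z ∈ t.nodes) :
    ∀ k, t'.parent^[k] z = t.parent^[k] z ∧ t.parent^[k] z ∈ t.nodes := by
  intro k
  induction k with
  | zero => exact ⟨rfl, hz⟩
  | succ k ih =>
    obtain ⟨h1, h2⟩ := ih
    constructor
    · rw [Function.iterate_succ_apply', Function.iterate_succ_apply', h1, hp,
        Function.update_of_ne (by rintro rfl; exact hy h2)]
    · rw [Function.iterate_succ_apply']
      by_cases hroot : t.parent^[k] z = t.root
      · rw [hroot, hpr]; exact t.root_mem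
      · exact t.parent_mem _ h2 hroot

lemma depth_eq_exists {t t' : SITree} {y x : ℕ} (hy : y ∉ t.nodes)
    (hpr : t.parent t.root = t.root) (hr : t'.root = t.root)
    (hp : t'.parent = Function.update t.parent y x) {z : ℕ} (hz : z ∈ t.nodes) :
    t'.depth z = t.depth z := by
  unfold SITree.depth
  have hsets : {k | t'.parent^[k] z = t'.root} = {k | t.parent^[k] z = t.root} := by
    ext k
    rw [Set.mem_setOf_eq, Set.mem_setOf_eq, (exists_iter hy hpr hp hz k).1, hr]
  rw [hsets]

lemma depth_new {t t' : SITree} {y x : ℕ} (hy : y ∉ t.nodes)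
    (hpr : t.parent t.root = t.root) (hr : t'.root = t.root)
    (hp : t'.parent = Function.update t.parent y x) (hx : x ∈ t.nodes) :
    t'.depth y = t.depth x + 1 := by
  have hyr' : y ≠ t'.root := by rw [hr]; rintro rfl; exact hy t.root_mem
  have hsucc : ∀ j, t'.parent^[j+1] y = t.parent^[j] x := by
    intro j
    have h1 : t'.parent y = x := by rw [hp]; exact Function.update_self _ _ _
    rw [Function.iterate_succ_apply, h1]
    exact (exists_iter hy hpr hp hx j).1
  have hmem : t.depth x + 1 ∈ {k | t'.parent^[k] y = t'.root} := by
    show t'.parent^[t.depth x + 1] y = t'.root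
    rw [hsucc, hr]; exact depth_spec hx
  apply le_antisymm
  · exact Nat.sInf_le hmem
  · apply le_csInf ⟨_, hmem⟩
    intro b hb
    match b with
    | 0 => exact absurd hb hyr'
    | j+1 =>
      have hb' : t.parent^[j] x = t.root := by
        have : t'.parent^[j+1] y = t'.root := hb
        rwa [hsucc, hr] at this
      have : t.depth x ≤ j := Nat.sInf_le hb'
      omega

lemma inv_init (Rp : Set ℕ) (D : DLConcept) : Inv Rp D (initSITree D) := by
  refine ⟨?_, ?_, rfl, ?_, ?_⟩
  · intro x F hF
    by_cases hx : x = 0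
    · subst hx
      simp [initSITree] at hF
      first
      | (rw [hF]; exact self_mem_subl D)
      | (rw [← hF]; exact self_mem_subl D)
    · simp only [initSITree, if_neg hx] at hF
      exact absurd hF (by simp)
  · intro x hx
    have : x ≠ 0 := by simpa [initSITree] using hx
    simp [initSITree, this]
  · intro y hy hyr
    have : y = 0 := by simpa [initSITree] using hy
    exact absurd this hyr
  · intro x F hF
    by_cases hx : x = 0
    · subst hx
      simp [initSITree] at hF
      first
      | (rw [hF]; exact J.base)
      | (rw [← hF]; exact J.base)
    · simp only [initSITree, if_neg hx] at hF
      exact absurd hF (by simp)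

theorem si_path_bound' (Rp : Set ℕ) (D : DLConcept) :
    ∀ t : SITree, Relation.ReflTransGen (SIStep Rp) (initSITree D) t →
      ∀ x ∈ t.nodes,
        t.depth x ≤ {C | Relation.ReflTransGen DirectSub C D}.ncard ^ 4 := by
  intro t hreach x hx
  rw [ncard_subD]
  suffices h : Inv Rp D t ∧ ∀ z ∈ t.nodes, t.depth z ≤ (subl D).card ^ 4 from
    h.2 x hx
  clear hx
  induction hreach with
  | refl =>
    refine ⟨inv_init Rp D, ?_⟩
    intro z hz
    have hz0 : z = 0 := by simpa [initSITree] using hz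
    subst hz0
    have h0 : (initSITree D).depth 0 ≤ 0 := by
      apply Nat.sInf_le
      show (initSITree D).parent^[0] 0 = (initSITree D).root
      rfl
    exact le_trans h0 (Nat.zero_le _)
  | tail hsteps hstep ih =>
    obtain ⟨hInv, hbd⟩ := ih
    refine ⟨inv_preserved hstep hInv, ?_⟩
    cases hstep with
    | conj x C₁ C₂ hx hC hnew hn hr hp hl hb he =>
      intro z hz
      rw [hn] at hz
      rw [depth_eq_of_eq hp hr]
      exact hbd z hz
    | disj x C₁ C₂ E hx hC hnew hE hn hr hp hl hb he =>
      intro z hz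
      rw [hn] at hz
      rw [depth_eq_of_eq hp hr]
      exact hbd z hz
    | allSucc x y S C hx hC hy hnew hn hr hp hl hb he =>
      intro z hz
      rw [hn] at hz
      rw [depth_eq_of_eq hp hr]
      exact hbd z hz
    | allPred x y S C hx hC hy hnew hn hr hp hl hb he =>
      intro z hz
      rw [hn] at hz
      rw [depth_eq_of_eq hp hr]
      exact hbd z hz
    | allTransSucc x y S C hx hC htr hy hnew hn hr hp hl hb he =>
      intro z hz
      rw [hn] at hz
      rw [depth_eq_of_eq hp hr]
      exact hbd z hz
    | allTransPred x y S C hx hC htr hy hnew hn hr hp hl hb he =>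
      intro z hz
      rw [hn] at hz
      rw [depth_eq_of_eq hp hr]
      exact hbd z hz
    | exists_ x y S C hx hC hnb hanc hnew hy hn hr hp hl hb he =>
      intro z hz
      rw [hn, Finset.mem_insert] at hz
      rcases hz with rfl | hz
      · rw [depth_new hy hInv.prootp hr hp hx]
        exact fire_bound hInv hx hC hnb hanc
      · rw [depth_eq_exists hy hInv.prootp hr hp hz]
        exact hbd z hz

end SIPB

/-- **Lemma 5: polynomial path bound for SI.** With
`m = |sub(D)|`, every path in a completion tree generated by the SI tableaux
algorithm for an SI-concept `D` in NNF has length at most `m⁴`. -/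
theorem si_path_bound (Rp : Set ℕ) (D : DLConcept)
    (hNNF : D.IsNNF) (hSI : D.IsSI) :
    ∀ t : SITree, Relation.ReflTransGen (SIStep Rp) (initSITree D) t →
      ∀ x ∈ t.nodes,
        t.depth x ≤ {C | Relation.ReflTransGen DirectSub C D}.ncard ^ 4 := by
  exact SIPB.si_path_bound' Rp D
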